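/- arXiv:1106.3779 — 13 statements merged into one kernel-verified Lean document; each statement's English description precedes it below -/
import Mathlib

section
/- For a summable sequence of positive reals (x_i), the subsum set Σ = { ∑_{i∈A} x_i : A ⊆ ℕ } is a compact subset of [0, X₀], where X₀ = ∑ x_i, and it contains both 0 and X₀. -/
/-- The subsum set of a sequence: all sums over subsets of the index set. -/
def subsums (x : ℕ → ℝ) : Set ℝ :=
  {r | ∃ A : Set ℕ, HasSum (fun i : A => x i) r}

/-- For a summable positive sequence, the subsum set is a compact subset of `[0, X₀]`
containing `0` and `X₀`, where `X₀` is the total sum. -/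
theorem subsums_compact_subset_Icc (x : ℕ → ℝ)
    (hpos : ∀ i, 0 < x i) (hsum : Summable x) :
    IsCompact (subsums x) ∧ subsums x ⊆ Set.Icc 0 (∑' i, x i) ∧
      (0 : ℝ) ∈ subsums x ∧ (∑' i, x i) ∈ subsums x := by
  classical
  have hmem : ∀ r, r ∈ subsums x ↔ ∃ A : Set ℕ, HasSum (A.indicator x) r := by
    intro r
    constructor
    · rintro ⟨A, h⟩; exact ⟨A, hasSum_subtype_iff_indicator.1 h⟩
    · rintro ⟨A, h⟩; exact ⟨A, hasSum_subtype_iff_indicator.2 h⟩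
  set F : (ℕ → Bool) → ℝ := fun a => ∑' i, if a i then x i else 0 with hF
  have hcont : Continuous F := by
    refine continuous_tsum ?_ hsum ?_
    · intro i
      exact (continuous_of_discreteTopology (f := fun b : Bool => if b then x i else 0)).comp
        (continuous_apply i)
    · intro i a
      by_cases h : a i <;> simp [h, abs_of_nonneg, (hpos i).le]
  have hrange : subsums x = Set.range F := by
    ext r
    rw [hmem]
    constructor
    · rintro ⟨A, h⟩
      refine ⟨fun i => decide (i ∈ A), ?_⟩
      have he : (fun i => if decide (i ∈ A) = true then x i else 0) = A.indicator x := by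
        ext i; by_cases h' : i ∈ A <;> simp [Set.indicator, h']
      simp only [hF, he]
      exact h.tsum_eq
    · rintro ⟨a, rfl⟩
      refine ⟨{i | a i = true}, ?_⟩
      have he : ({i | a i = true} : Set ℕ).indicator x = fun i => if a i then x i else 0 := by
        ext i; by_cases h' : a i <;> simp [Set.indicator, h']
      rw [he]
      have hs : Summable (fun i => if a i then x i else 0) := by
        rw [← he]; exact hsum.indicator _
      exact hs.hasSum
  refine ⟨?_, ?_, ?_, ?_⟩
  · rw [hrange]; exact isCompact_range hcont
  · intro r hr
    rcases (hmem r).1 hr with ⟨A, h⟩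
    have hle : ∀ i, A.indicator x i ≤ x i := fun i =>
      Set.indicator_le_self' (fun i _ => (hpos i).le) i
    have hnn : ∀ i, 0 ≤ A.indicator x i := fun i =>
      Set.indicator_nonneg (fun i _ => (hpos i).le) i
    exact ⟨h.nonneg hnn, hasSum_le hle h hsum.hasSum⟩
  · rw [hmem]
    exact ⟨∅, by simpa using hasSum_zero⟩
  · rw [hmem]
    exact ⟨Set.univ, by simpa using hsum.hasSum⟩
end

section
/- For a summable sequence of positive reals (x_i), the subsum set Σ is a perfect set: it is closed and has no isolated points. -/
lemma mem_subsums_of_indicator {x : ℕ → ℝ} {A : Set ℕ} {r : ℝ}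
    (h : HasSum (A.indicator x) r) : r ∈ subsums x :=
  ⟨A, hasSum_subtype_iff_indicator.mpr h⟩

lemma hasSum_indicator_singleton (x : ℕ → ℝ) (i : ℕ) :
    HasSum (Set.indicator {i} x) (x i) := by
  have : Set.indicator {i} x = fun j => if j = i then x i else 0 := by
    funext j
    by_cases h : j = i <;> simp [Set.indicator, h]
  rw [this]
  exact hasSum_ite_eq i (x i)

/-- The subsum set of a summable positive sequence is a perfect set:
closed with no isolated points. -/
theorem subsums_perfect (x : ℕ → ℝ)
    (hpos : ∀ i, 0 < x i) (hsum : Summable x) :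
    Perfect (subsums x) := by
  classical
  -- the map from {0,1}^ℕ
  set g : (ℕ → Bool) → ℝ := fun a => ∑' i, if a i then x i else 0 with hg
  have hcont : Continuous g := by
    apply continuous_tsum (u := x) (fun i => ?_) hsum (fun i a => ?_)
    · exact (continuous_of_discreteTopology (f := fun b : Bool => if b then x i else 0)).comp
        (continuous_apply i)
    · by_cases h : a i <;> simp [h, abs_of_nonneg (hpos i).le, (hpos i).le]
  have hrange : subsums x = Set.range g := by
    ext r
    constructor
    · rintro ⟨A, hA⟩
      have hI : HasSum (A.indicator x) r := hasSum_subtype_iff_indicator.mp hA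
      refine ⟨fun i => decide (i ∈ A), ?_⟩
      have : (fun i => if decide (i ∈ A) = true then x i else 0) = A.indicator x := by
        funext i
        by_cases h : i ∈ A <;> simp [h, Set.indicator]
      simp only [hg, this]
      exact hI.tsum_eq
    · rintro ⟨a, rfl⟩
      have : Set.indicator {i | a i = true} x = fun i => if a i then x i else 0 := by
        funext i
        by_cases h : a i <;> simp [Set.indicator, h]
      refine mem_subsums_of_indicator (A := {i | a i = true}) ?_
      rw [this]
      have hs : Summable fun i => if a i then x i else 0 :=
        (hsum.indicator {i | a i = true}).congr
          (fun i => by by_cases h : a i <;> simp [Set.indicator, h])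
      exact hs.hasSum
  constructor
  · rw [hrange]
    exact (isCompact_range hcont).isClosed
  · intro r hr
    obtain ⟨A, hA⟩ := hr
    have hI : HasSum (A.indicator x) r := hasSum_subtype_iff_indicator.mp hA
    rw [accPt_iff_nhds]
    intro U hU
    obtain ⟨ε, hε, hball⟩ := Metric.mem_nhds_iff.mp hU
    -- find large index with small term
    have htend : ∀ (S : Set ℕ), S.Infinite → ∃ i ∈ S, x i < ε := by
      intro S hS
      have := hsum.tendsto_atTop_zero
      have hev : ∀ᶠ i in Filter.atTop, x i < ε := this (Iio_mem_nhds hε)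
      obtain ⟨N, hN⟩ := Filter.eventually_atTop.mp hev
      obtain ⟨i, hiS, hiN⟩ := hS.exists_gt N
      exact ⟨i, hiS, hN i hiN.le⟩
    by_cases hAinf : A.Infinite
    · obtain ⟨i, hiA, hix⟩ := htend A hAinf
      refine ⟨r - x i, ⟨?_, ?_⟩, ?_⟩
      · apply hball
        rw [Metric.mem_ball, Real.dist_eq]
        have h1 : r - x i - r = -x i := by ring
        rw [h1, abs_neg, abs_of_pos (hpos i)]
        exact hix
      · refine mem_subsums_of_indicator (A := A \ {i}) ?_
        have heq : (A \ {i}).indicator x = A.indicator x - Set.indicator {i} x := by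
          funext j
          by_cases hj : j = i
          · subst hj; simp [Set.indicator, hiA]
          · by_cases hjA : j ∈ A <;> simp [Set.indicator, hj, hjA]
        rw [heq]
        exact hI.sub (hasSum_indicator_singleton x i)
      · have := hpos i; intro h; nlinarith [sub_eq_self.mp h]
    · have hcinf : Aᶜ.Infinite := (Set.not_infinite.mp hAinf).infinite_compl
      obtain ⟨i, hiA, hix⟩ := htend Aᶜ hcinf
      refine ⟨r + x i, ⟨?_, ?_⟩, ?_⟩
      · apply hball
        rw [Metric.mem_ball, Real.dist_eq]
        have h1 : r + x i - r = x i := by ring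
        rw [h1, abs_of_pos (hpos i)]
        exact hix
      · refine mem_subsums_of_indicator (A := A ∪ {i}) ?_
        have heq : (A ∪ {i}).indicator x = A.indicator x + Set.indicator {i} x := by
          apply Set.indicator_union_of_disjoint
          simpa [Set.disjoint_singleton_right] using hiA
        rw [heq]
        exact hI.add (hasSum_indicator_singleton x i)
      · intro h; nlinarith [hpos i, add_eq_left.mp h]
end

section
/- If (x_i) is a summable sequence of positive reals such that for every n the tail bounds the term, i.e. x_n ≤ ∑_{k>n} x_k, then the subsum set Σ equals the full interval [0, X₀], where X₀ = ∑ x_i. -/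
/-- Greedy leftover: what remains of `t` after greedily subtracting terms. -/
noncomputable def leftover (x : ℕ → ℝ) (t : ℝ) : ℕ → ℝ
  | 0 => t
  | n + 1 => if x n ≤ leftover x t n then leftover x t n - x n else leftover x t n

/-- If every tail bounds the corresponding term (`x n ≤ ∑_{k>n} x k` for all `n`),
then the subsum set is the full interval `[0, X₀]`. -/
theorem subsums_eq_Icc_of_tail_bounds (x : ℕ → ℝ)
    (hpos : ∀ i, 0 < x i) (hsum : Summable x)
    (htail : ∀ n, x n ≤ ∑' k, x (n + 1 + k)) :
    subsums x = Set.Icc 0 (∑' i, x i) := by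
  classical
  ext r
  simp only [Set.mem_Icc, subsums, Set.mem_setOf_eq]
  constructor
  · rintro ⟨A, hA⟩
    have hA' : HasSum (A.indicator x) r := hasSum_subtype_iff_indicator.1 hA
    refine ⟨?_, ?_⟩
    · exact hasSum_le (fun n => Set.indicator_nonneg (fun i _ => (hpos i).le) n)
        hasSum_zero hA'
    · exact hasSum_le (fun n => Set.indicator_le_self' (fun i _ => (hpos i).le) n)
        hA' hsum.hasSum
  · rintro ⟨h0, h1⟩
    set X : ℕ → ℝ := fun n => ∑' k, x (n + k) with hX
    have hXsum : ∀ n, Summable fun k => x (n + k) := fun n => by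
      simpa [add_comm] using (summable_nat_add_iff n).2 hsum
    have hXrec : ∀ n, X n = x n + X (n + 1) := by
      intro n
      have h := Summable.tsum_eq_zero_add (hXsum n)
      have h2 : ∀ k, n + (k + 1) = n + 1 + k := fun k => by omega
      simp only [hX, add_zero] at h ⊢
      rw [h]
      congr 1
      exact tsum_congr fun k => by rw [h2 k]
    have hinv : ∀ n, 0 ≤ leftover x r n ∧ leftover x r n ≤ X n := by
      intro n
      induction n with
      | zero =>
        refine ⟨h0, ?_⟩
        simpa [hX, leftover] using h1
      | succ n ih =>
        by_cases h : x n ≤ leftover x r n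
        · rw [leftover, if_pos h]
          constructor
          · linarith
          · have := hXrec n
            linarith [ih.2]
        · rw [leftover, if_neg h]
          refine ⟨ih.1, ?_⟩
          have hx : x n ≤ X (n + 1) := htail n
          push_neg at h
          linarith
    have hXtend : Filter.Tendsto X Filter.atTop (nhds 0) := by
      have := tendsto_sum_nat_add x
      simpa [hX, add_comm] using this
    have hltend : Filter.Tendsto (leftover x r) Filter.atTop (nhds 0) :=
      squeeze_zero (fun n => (hinv n).1) (fun n => (hinv n).2) hXtend
    set A : Set ℕ := {n | x n ≤ leftover x r n} with hAdef
    have hS : ∀ n, (∑ k ∈ Finset.range n, A.indicator x k) + leftover x r n = r := by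
      intro n
      induction n with
      | zero => simp [leftover]
      | succ n ih =>
        rw [Finset.sum_range_succ]
        by_cases h : x n ≤ leftover x r n
        · have hm : n ∈ A := h
          rw [Set.indicator_of_mem hm, leftover, if_pos h]
          linarith
        · have hm : n ∉ A := h
          rw [Set.indicator_of_notMem hm, leftover, if_neg h]
          linarith
    have hsummable : Summable (A.indicator x) := hsum.indicator A
    have h1' : Filter.Tendsto (fun n => ∑ k ∈ Finset.range n, A.indicator x k)
        Filter.atTop (nhds (∑' k, A.indicator x k)) :=
      hsummable.hasSum.tendsto_sum_nat
    have h2' : Filter.Tendsto (fun n => ∑ k ∈ Finset.range n, A.indicator x k)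
        Filter.atTop (nhds r) := by
      have : (fun n => ∑ k ∈ Finset.range n, A.indicator x k)
          = fun n => r - leftover x r n := by
        funext n
        have := hS n
        linarith
      rw [this]
      simpa using tendsto_const_nhds.sub hltend
    have : (∑' k, A.indicator x k) = r := tendsto_nhds_unique h1' h2'
    exact ⟨A, hasSum_subtype_iff_indicator.2 (this ▸ hsummable.hasSum)⟩
end

section
/- If (x_i) is a summable sequence of positive reals such that for every n the term exceeds the tail, i.e. x_n > ∑_{k>n} x_k, then the subsum set Σ is homeomorphic to the Cantor set; in particular, Σ is totally disconnected, and two subsets A ≠ B of indices give distinct subsums. -/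
open Set in
/-- Key lemma: if `A` and `B` agree below `n`, and `n ∈ A`, `n ∉ B`, then the
subsum over `B` is strictly smaller than the subsum over `A`. -/
lemma subsums_key_lt (x : ℕ → ℝ) (hpos : ∀ i, 0 < x i) (hsum : Summable x)
    (hterm : ∀ n, x n > ∑' k, x (n + 1 + k)) (A B : Set ℕ) (n : ℕ)
    (hagree : ∀ m < n, (m ∈ A ↔ m ∈ B)) (hA : n ∈ A) (hB : n ∉ B) :
    ∑' i, B.indicator x i < ∑' i, A.indicator x i := by
  have sA : Summable (A.indicator x) := hsum.indicator A
  have sB : Summable (B.indicator x) := hsum.indicator B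
  have hsplitA := Summable.sum_add_tsum_nat_add (f := A.indicator x) (n + 1) sA
  have hsplitB := Summable.sum_add_tsum_nat_add (f := B.indicator x) (n + 1) sB
  rw [← hsplitA, ← hsplitB]
  have hfin : ∀ m ∈ Finset.range n, A.indicator x m = B.indicator x m := by
    intro m hm
    have := hagree m (Finset.mem_range.mp hm)
    by_cases h : m ∈ A
    · rw [indicator_of_mem h, indicator_of_mem (this.mp h)]
    · rw [indicator_of_notMem h, indicator_of_notMem (fun hb => h (this.mpr hb))]
  have hsumfinA : ∑ i ∈ Finset.range (n + 1), A.indicator x i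
      = (∑ i ∈ Finset.range n, B.indicator x i) + x n := by
    rw [Finset.sum_range_succ, Finset.sum_congr rfl hfin, indicator_of_mem hA]
  have hsumfinB : ∑ i ∈ Finset.range (n + 1), B.indicator x i
      = ∑ i ∈ Finset.range n, B.indicator x i := by
    rw [Finset.sum_range_succ, indicator_of_notMem hB, add_zero]
  rw [hsumfinA, hsumfinB]
  have htailB : ∑' k, B.indicator x (k + (n + 1)) ≤ ∑' k, x (n + 1 + k) := by
    have : ∀ k, B.indicator x (k + (n + 1)) ≤ x (n + 1 + k) := by
      intro k
      rw [add_comm (n + 1) k]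
      exact indicator_le_self' (fun i _ => (hpos i).le) _
    exact Summable.tsum_le_tsum this (sB.comp_injective (add_left_injective (n + 1)))
      ((hsum.comp_injective (add_right_injective (n + 1))))
  have htailA : 0 ≤ ∑' k, A.indicator x (k + (n + 1)) :=
    tsum_nonneg fun k => indicator_nonneg (fun i _ => (hpos i).le) _
  have := htailB.trans_lt (hterm n)
  linarith

open Set in
lemma subsums_inj (x : ℕ → ℝ) (hpos : ∀ i, 0 < x i) (hsum : Summable x)
    (hterm : ∀ n, x n > ∑' k, x (n + 1 + k)) (A B : Set ℕ) (hAB : A ≠ B) :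
    ∑' i, A.indicator x i ≠ ∑' i, B.indicator x i := by
  have hex : ∃ n, ¬(n ∈ A ↔ n ∈ B) := by
    by_contra h
    push_neg at h
    exact hAB (Set.ext h)
  classical
  let n := Nat.find hex
  have hn : ¬(n ∈ A ↔ n ∈ B) := Nat.find_spec hex
  have hagree : ∀ m < n, (m ∈ A ↔ m ∈ B) := fun m hm =>
    not_not.mp (Nat.find_min hex hm)
  by_cases hA : n ∈ A
  · have hB : n ∉ B := fun hB => hn ⟨fun _ => hB, fun _ => hA⟩
    exact (subsums_key_lt x hpos hsum hterm A B n hagree hA hB).ne'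
  · have hB : n ∈ B := by
      by_contra hB
      exact hn ⟨fun h => absurd h hA, fun h => absurd h hB⟩
    exact (subsums_key_lt x hpos hsum hterm B A n
      (fun m hm => (hagree m hm).symm) hB hA).ne

/-- If every term exceeds the corresponding tail (`x n > ∑_{k>n} x k` for all `n`),
then the subsum set is homeomorphic to the Cantor set, is totally disconnected, and
distinct index sets give distinct subsums. -/
theorem subsums_cantor_of_term_exceeds_tail (x : ℕ → ℝ)
    (hpos : ∀ i, 0 < x i) (hsum : Summable x)
    (hterm : ∀ n, x n > ∑' k, x (n + 1 + k)) :
    Nonempty (↥(subsums x) ≃ₜ (ℕ → Bool)) ∧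
      IsTotallyDisconnected (subsums x) ∧
      ∀ (A B : Set ℕ) (r s : ℝ), HasSum (fun i : A => x i) r →
        HasSum (fun i : B => x i) s → A ≠ B → r ≠ s := by
  classical
  -- the basic map from the Cantor set to ℝ
  set f : (ℕ → Bool) → ℝ := fun b => ∑' i, Set.indicator {i | b i = true} x i with hf
  have hfif : ∀ b : ℕ → Bool, f b = ∑' i, (if b i then x i else 0) := by
    intro b
    refine tsum_congr fun i => ?_
    rw [Set.indicator_apply]
    simp only [Set.mem_setOf_eq]
  -- f is continuous
  have hcont : Continuous f := by
    have : Continuous fun b : ℕ → Bool => ∑' i, (if b i then x i else 0) := by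
      refine continuous_tsum (fun i => ?_) hsum (fun i b => ?_)
      · exact (continuous_of_discreteTopology
          (f := fun t : Bool => if t then x i else 0)).comp (continuous_apply i)
      · by_cases h : b i
        · simp [h, abs_of_pos (hpos i)]
        · simp [h, (hpos i).le]
    simpa [← hfif] using this
  -- f is injective
  have hinj : Function.Injective f := by
    intro b c hbc
    by_contra hne
    have hABne : {i | b i = true} ≠ {i | c i = true} := by
      intro h
      apply hne
      funext i
      have : (b i = true) ↔ (c i = true) := by
        constructor
        · intro hi; exact (Set.ext_iff.mp h i).mp hi
        · intro hi; exact (Set.ext_iff.mp h i).mpr hi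
      cases hb : b i <;> cases hc : c i <;> simp_all
    exact subsums_inj x hpos hsum hterm _ _ hABne hbc
  -- f has image exactly subsums x
  have hmem : ∀ b, f b ∈ subsums x := by
    intro b
    refine ⟨{i | b i = true}, ?_⟩
    have : HasSum (x ∘ ((↑) : {i | b i = true} → ℕ)) (f b) := by
      rw [hasSum_subtype_iff_indicator]
      exact (hsum.indicator _).hasSum
    exact this
  have hsurj : ∀ r ∈ subsums x, ∃ b, f b = r := by
    rintro r ⟨A, hA⟩
    refine ⟨fun i => if i ∈ A then true else false, ?_⟩
    have hset : {i | (if i ∈ A then true else false) = true} = A := by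
      ext i; by_cases h : i ∈ A <;> simp [h]
    rw [hf]
    simp only [hset]
    have hA' : HasSum (x ∘ ((↑) : A → ℕ)) r := hA
    rw [hasSum_subtype_iff_indicator] at hA'
    exact hA'.tsum_eq
  -- build the equivalence
  have hrange : Set.range f = subsums x := by
    apply Set.eq_of_subset_of_subset
    · rintro r ⟨b, rfl⟩; exact hmem b
    · intro r hr; obtain ⟨b, hb⟩ := hsurj r hr; exact ⟨b, hb⟩
  let g : (ℕ → Bool) → ↥(subsums x) := fun b => ⟨f b, hmem b⟩
  have hgbij : Function.Bijective g := by
    constructor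
    · intro a b hab
      exact hinj (congrArg Subtype.val hab)
    · rintro ⟨r, hr⟩
      obtain ⟨b, hb⟩ := hsurj r hr
      exact ⟨b, Subtype.ext hb⟩
  let e : (ℕ → Bool) ≃ ↥(subsums x) := Equiv.ofBijective g hgbij
  have hconte : Continuous e := hcont.subtype_mk _
  let homeo : (ℕ → Bool) ≃ₜ ↥(subsums x) := hconte.homeoOfEquivCompactToT2
  -- total disconnectedness
  have hfemb : Topology.IsEmbedding f := by
    have : Topology.IsEmbedding ((Subtype.val : ↥(subsums x) → ℝ) ∘ e) :=
      Topology.IsEmbedding.subtypeVal.comp homeo.isEmbedding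
    exact this
  have htd : IsTotallyDisconnected (subsums x) := by
    rw [← hrange]
    exact hfemb.isTotallyDisconnected_range.mpr inferInstance
  refine ⟨⟨homeo.symm⟩, htd, ?_⟩
  intro A B r s hr hs hAB
  have hr' : HasSum (x ∘ ((↑) : A → ℕ)) r := hr
  have hs' : HasSum (x ∘ ((↑) : B → ℕ)) s := hs
  rw [hasSum_subtype_iff_indicator] at hr' hs'
  rw [← hr'.tsum_eq, ← hs'.tsum_eq]
  exact subsums_inj x hpos hsum hterm A B hAB
end

section
/- Let (x_i) be a non-increasing summable sequence of positive reals, and suppose x_n ≤ X_n := ∑_{k>n} x_k for all n > N. Then the subsum set Σ is a union of at most 2^N closed intervals, namely Σ = ⋃ over ε ∈ {0,1}^N of [ ∑_{i≤N} ε_i x_i , ∑_{i≤N} ε_i x_i + X_N ]. -/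
open Filter Topology


/-- Greedy lemma: if positive summable `y` satisfies `y n ≤ tail (n+1)` for all `n`,
then every `t ∈ [0, ∑ y]` is a subsum, realized via an indicator. -/
lemma greedy_subsum (y : ℕ → ℝ) (hpos : ∀ i, 0 < y i) (hsum : Summable y)
    (htail : ∀ n, y n ≤ ∑' k, y (n + 1 + k)) (t : ℝ)
    (ht0 : 0 ≤ t) (ht1 : t ≤ ∑' k, y k) :
    ∃ A : Set ℕ, HasSum (A.indicator y) t := by
  classical
  set T : ℕ → ℝ := fun n => ∑' k, y (n + k) with hT
  have hsumsh : ∀ n, Summable fun k => y (n + k) := by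
    intro n
    have := (summable_nat_add_iff n).mpr hsum
    exact this.congr (fun k => by rw [add_comm])
  have hTrec : ∀ n, T n = y n + T (n + 1) := by
    intro n
    have h0 := Summable.tsum_eq_zero_add (hsumsh n)
    simp only [hT]
    rw [h0, add_zero]
    congr 1
    exact tsum_congr fun k => by congr 1; omega
  have hT0 : ∀ n, 0 ≤ T n := fun n =>
    tsum_nonneg fun k => (hpos _).le
  -- T tends to 0
  have hTtend : Tendsto T atTop (nhds 0) := by
    have h1 : ∀ n, T n = (∑' k, y k) - ∑ i ∈ Finset.range n, y i := by
      intro n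
      have := Summable.sum_add_tsum_nat_add (f := y) n hsum
      have h2 : T n = ∑' i, y (i + n) := tsum_congr fun k => by rw [add_comm]
      linarith
    have h2 : Tendsto (fun n => ∑ i ∈ Finset.range n, y i) atTop (nhds (∑' k, y k)) :=
      hsum.hasSum.tendsto_sum_nat
    have h3 : Tendsto (fun n => (∑' k, y k) - ∑ i ∈ Finset.range n, y i) atTop
        (nhds ((∑' k, y k) - (∑' k, y k))) := tendsto_const_nhds.sub h2
    rw [sub_self] at h3
    exact h3.congr fun n => (h1 n).symm
  -- greedy remainders
  set r : ℕ → ℝ := fun n => Nat.rec t (fun n rn => if y n ≤ rn then rn - y n else rn) n with hr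
  have hr0 : r 0 = t := rfl
  have hrS : ∀ n, r (n + 1) = if y n ≤ r n then r n - y n else r n := fun n => rfl
  have hinv : ∀ n, 0 ≤ r n ∧ r n ≤ T n := by
    intro n
    induction n with
    | zero =>
      refine ⟨ht0, ?_⟩
      have hT00 : T 0 = ∑' k, y k := tsum_congr fun k => by rw [zero_add]
      rw [hr0, hT00]; exact ht1
    | succ n ih =>
      rw [hrS]
      by_cases h : y n ≤ r n
      · rw [if_pos h]
        constructor
        · linarith
        · have := hTrec n; linarith [ih.2]
      · rw [if_neg h]
        refine ⟨ih.1, ?_⟩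
        have h2 := htail n
        have h3 : (∑' k, y (n + 1 + k)) = T (n + 1) := rfl
        push_neg at h
        linarith
  set A : Set ℕ := {n | y n ≤ r n} with hA
  refine ⟨A, ?_⟩
  have hpart : ∀ n, ∑ i ∈ Finset.range n, A.indicator y i = t - r n := by
    intro n
    induction n with
    | zero => simp [hr0]
    | succ n ih =>
      rw [Finset.sum_range_succ, ih, hrS]
      by_cases h : y n ≤ r n
      · rw [if_pos h, Set.indicator_of_mem (show n ∈ A from h)]
        ring
      · rw [if_neg h, Set.indicator_of_notMem (show n ∉ A from h)]
        ring
  have hsummA : Summable (A.indicator y) := hsum.indicator A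
  have htend : Tendsto (fun n => ∑ i ∈ Finset.range n, A.indicator y i) atTop (nhds t) := by
    have hrt : Tendsto r atTop (nhds 0) := by
      refine tendsto_of_tendsto_of_tendsto_of_le_of_le tendsto_const_nhds hTtend
        (fun n => (hinv n).1) (fun n => (hinv n).2)
    have : Tendsto (fun n => t - r n) atTop (nhds (t - 0)) := tendsto_const_nhds.sub hrt
    rw [sub_zero] at this
    exact this.congr fun n => (hpart n).symm
  have := hsummA.hasSum.tendsto_sum_nat
  have heq : (∑' i, A.indicator y i) = t := tendsto_nhds_unique this htend
  exact heq ▸ hsummA.hasSum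

/-- If `(x i)` is a non-increasing summable positive sequence whose tail bounds the term
beyond position `N`, the subsum set is the union of the `2^N` closed intervals obtained
by translating `[0, X_N]` by the subsums of the first `N` terms. -/
theorem subsums_finite_union_of_eventual_tail_bound (x : ℕ → ℝ)
    (hpos : ∀ i, 0 < x i) (hsum : Summable x) (hmono : Antitone x)
    (N : ℕ) (htail : ∀ n, N ≤ n → x n ≤ ∑' k, x (n + 1 + k)) :
    subsums x = ⋃ ε : Fin N → Bool,
      Set.Icc (∑ i : Fin N, if ε i then x i else 0)
        ((∑ i : Fin N, if ε i then x i else 0) + ∑' k, x (N + k)) := by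
  classical
  set y : ℕ → ℝ := fun k => x (N + k) with hy
  have hysum : Summable y := by
    have := (summable_nat_add_iff N).mpr hsum
    exact this.congr fun k => by rw [hy]; congr 1; omega
  have hTy : (∑' k, x (N + k)) = ∑' k, y k := rfl
  ext t
  simp only [Set.mem_iUnion, Set.mem_Icc]
  constructor
  · rintro ⟨A, hA⟩
    have hg : HasSum (A.indicator x) t := hasSum_subtype_iff_indicator.mp hA
    set g := A.indicator x with hgdef
    have hsg : Summable g := hsum.indicator A
    have hsg' : Summable fun n => g (n + N) := (summable_nat_add_iff N).mpr hsg
    have hc : HasSum (fun n => g (n + N)) (∑' n, g (n + N)) := hsg'.hasSum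
    set c := ∑' n, g (n + N) with hcdef
    have hts : HasSum g (c + ∑ i ∈ Finset.range N, g i) := (hasSum_nat_add_iff N).mp hc
    have hteq : t = c + ∑ i ∈ Finset.range N, g i := hg.unique hts
    -- bounds on c
    have hind : ∀ n, g (n + N) = ({k | N + k ∈ A}.indicator y) n := by
      intro n
      simp only [hgdef, Set.indicator_apply, hy, Set.mem_setOf_eq]
      rw [add_comm n N]
    have hc' : HasSum ({k | N + k ∈ A}.indicator y) c := hc.congr_fun (fun n => (hind n).symm)  -- maybe wrong name
    have hc0 : 0 ≤ c := hc'.nonneg fun n => Set.indicator_nonneg (fun i _ => (hpos _).le) n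
    have hcle : c ≤ ∑' k, y k := by
      refine hasSum_le (fun n => ?_) hc' hysum.hasSum
      by_cases h : n ∈ {k | N + k ∈ A}
      · rw [Set.indicator_of_mem h]
      · rw [Set.indicator_of_notMem h]; exact (hpos _).le
    refine ⟨fun i => decide (↑i ∈ A), ?_, ?_⟩ <;>
    · have hfin : (∑ i : Fin N, if decide (↑i ∈ A) then x ↑i else 0)
          = ∑ i ∈ Finset.range N, g i := by
        rw [← Fin.sum_univ_eq_sum_range (fun i => g i) N]
        refine Finset.sum_congr rfl fun i _ => ?_
        simp only [hgdef, Set.indicator_apply, decide_eq_true_eq]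
      rw [hfin]
      linarith [hteq, hc0, hcle, hTy]
  · rintro ⟨ε, h1, h2⟩
    set sN := ∑ i : Fin N, if ε i then x ↑i else 0 with hsN
    have hytail : ∀ n, y n ≤ ∑' k, y (n + 1 + k) := by
      intro n
      have := htail (N + n) (by omega)
      calc y n = x (N + n) := rfl
        _ ≤ ∑' k, x (N + n + 1 + k) := this
        _ = ∑' k, y (n + 1 + k) := tsum_congr fun k => by simp only [hy]; congr 1; omega
    obtain ⟨B, hB⟩ := greedy_subsum y (fun i => hpos _) hysum hytail (t - sN)
      (by linarith) (by rw [← hTy]; linarith)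
    set A : Set ℕ := {i | if h : i < N then ε ⟨i, h⟩ = true else (i - N) ∈ B} with hA
    refine ⟨A, hasSum_subtype_iff_indicator.mpr ?_⟩
    set g := A.indicator x with hgdef
    have hshift : ∀ n, g (n + N) = (B.indicator y) n := by
      intro n
      have hlt : ¬ (n + N < N) := by omega
      simp only [hgdef, Set.indicator_apply, hA, Set.mem_setOf_eq, dif_neg hlt]
      have h1 : n + N - N = n := by omega
      rw [h1]
      have h2 : x (n + N) = y n := congrArg x (by omega)
      rw [h2]
    have hgN : HasSum (fun n => g (n + N)) (t - sN) := hB.congr_fun hshift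
    have := (hasSum_nat_add_iff N).mp hgN
    have hfin : (∑ i ∈ Finset.range N, g i) = sN := by
      rw [hsN, ← Fin.sum_univ_eq_sum_range (fun i => g i) N]
      refine Finset.sum_congr rfl fun i _ => ?_
      simp only [hgdef, Set.indicator_apply, hA, Set.mem_setOf_eq]
      have hcond : (if h : (i : ℕ) < N then ε ⟨↑i, h⟩ = true else ((i : ℕ) - N) ∈ B) = (ε i = true) := by
        rw [dif_pos i.isLt]
      simp only [hcond]
    have he : t - sN + ∑ i ∈ Finset.range N, g i = t := by rw [hfin]; ring
    rwa [he] at this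
end

section
/- Let (x_i) be a non-increasing summable sequence of positive reals such that x_n > X_n := ∑_{k>n} x_k for n = 1, ..., K. Then the 2^K intervals J_ε = [ ∑_{i≤K} ε_i x_i , ∑_{i≤K} ε_i x_i + X_K ], for ε ∈ {0,1}^K, are pairwise disjoint, and each contains points of the subsum set; hence Σ has at least 2^K connected components. -/
open Finset

namespace SubsumsAux

noncomputable def Sb (x : ℕ → ℝ) (K : ℕ) (ε : Fin K → Bool) : ℝ :=
  ∑ i : Fin K, if ε i then x i else 0

noncomputable def Tl (x : ℕ → ℝ) (n : ℕ) : ℝ := ∑' k, x (n + k)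

variable {x : ℕ → ℝ} {K : ℕ}

lemma summable_tail (hsum : Summable x) (n : ℕ) : Summable fun k => x (n + k) := by
  have := (summable_nat_add_iff (f := x) n).2 hsum
  simpa [add_comm] using this

lemma tail_succ (hsum : Summable x) (n : ℕ) : Tl x n = x n + Tl x (n + 1) := by
  have h := Summable.tsum_eq_zero_add (summable_tail hsum n)
  simp only [add_zero] at h
  simp only [Tl]
  rw [h]
  congr 1
  exact tsum_congr fun b => by ring_nf

lemma tail_eq (hsum : Summable x) (n m : ℕ) :
    Tl x n = (∑ i ∈ Finset.Ico n (n + m), x i) + Tl x (n + m) := by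
  induction m with
  | zero => simp
  | succ m ih =>
      rw [ih, tail_succ hsum (n + m)]
      rw [show n + (m + 1) = (n + m) + 1 by ring,
        Finset.sum_Ico_succ_top (Nat.le_add_right n m)]
      ring

lemma tail_nonneg (hpos : ∀ i, 0 < x i) (n : ℕ) : 0 ≤ Tl x n :=
  tsum_nonneg fun k => (hpos (n + k)).le

/-- auxiliary: sums as range sums -/
noncomputable def g (x : ℕ → ℝ) (K : ℕ) (ε : Fin K → Bool) (i : ℕ) : ℝ :=
  if h : i < K then (if ε ⟨i, h⟩ then x i else 0) else 0

lemma Sb_eq_range (ε : Fin K → Bool) : Sb x K ε = ∑ i ∈ range K, g x K ε i := by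
  rw [Sb, ← Fin.sum_univ_eq_sum_range (fun i => g x K ε i) K]
  refine Finset.sum_congr rfl fun i _ => ?_
  simp [g, i.isLt]

lemma gap (hpos : ∀ i, 0 < x i) (hsum : Summable x)
    (hterm : ∀ n, n < K → x n > ∑' k, x (n + 1 + k))
    (ε ε' : Fin K → Bool) (n : ℕ) (hn : n < K)
    (hfirst : ∀ m (hm : m < K), m < n → ε ⟨m, hm⟩ = ε' ⟨m, hm⟩)
    (hT : ε ⟨n, hn⟩ = true) (hF : ε' ⟨n, hn⟩ = false) :
    Sb x K ε' + Tl x K < Sb x K ε := by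
  have hd0 : ∀ i ∈ range K, i < n → g x K ε i - g x K ε' i = 0 := by
    intro i hi hlt
    have hiK : i < K := Finset.mem_range.mp hi
    simp [g, hiK, hfirst i hiK hlt]
  have hsplit : ∑ i ∈ range K, (g x K ε i - g x K ε' i)
      = ∑ i ∈ Finset.Ico 0 (n + 1), (g x K ε i - g x K ε' i)
        + ∑ i ∈ Finset.Ico (n + 1) K, (g x K ε i - g x K ε' i) := by
    rw [Finset.sum_Ico_consecutive _ (Nat.zero_le _) hn, ← Finset.range_eq_Ico]
  have h1 : ∑ i ∈ Finset.Ico 0 (n + 1), (g x K ε i - g x K ε' i) = x n := by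
    rw [← Finset.range_eq_Ico, Finset.sum_range_succ]
    have : ∑ i ∈ range n, (g x K ε i - g x K ε' i) = 0 := by
      refine Finset.sum_eq_zero fun i hi => ?_
      have hin : i < n := Finset.mem_range.mp hi
      have hiK : i < K := hin.trans hn
      simp [g, hiK, hfirst i hiK hin]
    rw [this, zero_add]
    simp [g, hn, hT, hF]
  have h2 : -(∑ i ∈ Finset.Ico (n + 1) K, x i)
      ≤ ∑ i ∈ Finset.Ico (n + 1) K, (g x K ε i - g x K ε' i) := by
    rw [← Finset.sum_neg_distrib]
    refine Finset.sum_le_sum fun i _ => ?_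
    have h1 : 0 ≤ g x K ε i := by
      unfold g; split <;> [skip; exact le_refl 0]
      split <;> [exact (hpos i).le; exact le_refl 0]
    have h2 : g x K ε' i ≤ x i := by
      unfold g; split
      · split <;> [exact le_refl _; exact (hpos i).le]
      · exact (hpos i).le
    linarith
  have htail : Tl x (n + 1) = (∑ i ∈ Finset.Ico (n + 1) K, x i) + Tl x K := by
    have := tail_eq hsum (n + 1) (K - (n + 1))
    rwa [Nat.add_sub_cancel' hn] at this
  have hx : x n > Tl x (n + 1) := hterm n hn
  have hsum_ge : Sb x K ε - Sb x K ε'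
      ≥ x n - ∑ i ∈ Finset.Ico (n + 1) K, x i := by
    rw [Sb_eq_range, Sb_eq_range, ← Finset.sum_sub_distrib, hsplit, h1]
    linarith
  linarith

lemma gap_symm (hpos : ∀ i, 0 < x i) (hsum : Summable x)
    (hterm : ∀ n, n < K → x n > ∑' k, x (n + 1 + k))
    {ε ε' : Fin K → Bool} (hne : ε ≠ ε') :
    Sb x K ε' + Tl x K < Sb x K ε ∨ Sb x K ε + Tl x K < Sb x K ε' := by
  classical
  have hP : ∃ m, ∃ hm : m < K, ε ⟨m, hm⟩ ≠ ε' ⟨m, hm⟩ := by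
    obtain ⟨i, hi⟩ := Function.ne_iff.mp hne
    exact ⟨i, i.isLt, by simpa using hi⟩
  set n := Nat.find hP with hn_def
  obtain ⟨hn, hne_n⟩ := Nat.find_spec hP
  have hfirst : ∀ m (hm : m < K), m < n → ε ⟨m, hm⟩ = ε' ⟨m, hm⟩ := by
    intro m hm hlt
    by_contra h
    exact Nat.find_min hP hlt ⟨hm, h⟩
  cases hε : ε ⟨n, hn⟩ with
  | true =>
      have hε' : ε' ⟨n, hn⟩ = false := by
        cases h' : ε' ⟨n, hn⟩ with
        | true => exact absurd (hε.trans h'.symm) hne_n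
        | false => rfl
      exact Or.inl (gap hpos hsum hterm ε ε' n hn hfirst hε hε')
  | false =>
      have hε' : ε' ⟨n, hn⟩ = true := by
        cases h' : ε' ⟨n, hn⟩ with
        | true => rfl
        | false => exact absurd (hε.trans h'.symm) hne_n
      exact Or.inr (gap hpos hsum hterm ε' ε n hn
        (fun m hm hlt => (hfirst m hm hlt).symm) hε' hε)

lemma Sb_mem_subsums (ε : Fin K → Bool) : Sb x K ε ∈ subsums x := by
  classical
  set F : Finset ℕ :=
    (Finset.univ.filter (fun i : Fin K => ε i = true)).map
      ⟨Fin.val, Fin.val_injective⟩ with hF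
  refine ⟨(↑F : Set ℕ), ?_⟩
  have h1 : HasSum (fun i : (↑F : Set ℕ) => x i) (∑ i ∈ F, x i) := F.hasSum x
  have h2 : ∑ i ∈ F, x i = Sb x K ε := by
    rw [hF, Finset.sum_map, Sb, ← Finset.sum_filter]
    rfl
  rwa [h2] at h1

lemma coverage (hpos : ∀ i, 0 < x i) (hsum : Summable x) {r : ℝ}
    (hr : r ∈ subsums x) :
    ∃ ε : Fin K → Bool, r ∈ Set.Icc (Sb x K ε) (Sb x K ε + Tl x K) := by
  classical
  obtain ⟨A, hA⟩ := hr
  set f : ℕ → ℝ := A.indicator x with hf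
  have hfr : HasSum f r := hasSum_subtype_iff_indicator.mp hA
  have hfs : Summable f := ⟨r, hfr⟩
  have hsplit : ∑ i ∈ range K, f i + ∑' i, f (i + K) = r := by
    rw [Summable.sum_add_tsum_nat_add K hfs, hfr.tsum_eq]
  refine ⟨fun i => decide ((i : ℕ) ∈ A), ?_⟩
  have hSb : Sb x K (fun i => decide ((i : ℕ) ∈ A)) = ∑ i ∈ range K, f i := by
    rw [Sb, ← Fin.sum_univ_eq_sum_range (fun i => f i) K]
    refine Finset.sum_congr rfl fun i _ => ?_
    by_cases h : (i : ℕ) ∈ A <;> simp [hf, Set.indicator_apply, h]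
  have hfle : ∀ i, f i ≤ x i := by
    intro i
    by_cases h : i ∈ A <;> simp [hf, Set.indicator_apply, h, (hpos i).le]
  have hf0 : ∀ i, 0 ≤ f i := by
    intro i
    by_cases h : i ∈ A <;> simp [hf, Set.indicator_apply, h, (hpos i).le]
  have hfs' : Summable fun i => f (i + K) := (summable_nat_add_iff K).2 hfs
  have hxs' : Summable fun i => x (K + i) := summable_tail hsum K
  have ht0 : 0 ≤ ∑' i, f (i + K) := tsum_nonneg fun i => hf0 _
  have ht1 : ∑' i, f (i + K) ≤ Tl x K := by
    refine Summable.tsum_le_tsum (fun i => ?_) hfs' ?_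
    · exact (hfle (i + K)).trans (by rw [add_comm])
    · exact hxs'
  constructor
  · rw [hSb]; linarith
  · rw [hSb]; linarith

lemma comp_ne (hpos : ∀ i, 0 < x i) (hsum : Summable x)
    (hterm : ∀ n, n < K → x n > ∑' k, x (n + 1 + k))
    {ε ε' : Fin K → Bool} (hgap : Sb x K ε' + Tl x K < Sb x K ε) :
    connectedComponentIn (subsums x) (Sb x K ε)
      ≠ connectedComponentIn (subsums x) (Sb x K ε') := by
  classical
  intro heq
  have hXK : 0 ≤ Tl x K := tail_nonneg hpos K
  set C := connectedComponentIn (subsums x) (Sb x K ε) with hC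
  have hmemε : Sb x K ε ∈ C := mem_connectedComponentIn (Sb_mem_subsums ε)
  have hmemε' : Sb x K ε' ∈ C := by
    rw [heq]; exact mem_connectedComponentIn (Sb_mem_subsums ε')
  have hord : C.OrdConnected := isPreconnected_connectedComponentIn.ordConnected
  have hsub : C ⊆ subsums x := connectedComponentIn_subset _ _
  set T : Finset (Fin K → Bool) :=
    Finset.univ.filter (fun δ => Sb x K δ < Sb x K ε) with hT
  have hε'T : ε' ∈ T := by
    rw [hT]; simp only [Finset.mem_filter, Finset.mem_univ, true_and]; linarith
  have hTne : (T.image (Sb x K)).Nonempty := ⟨_, Finset.mem_image_of_mem _ hε'T⟩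
  obtain ⟨δM, hδMT, hδM⟩ := Finset.mem_image.mp ((T.image (Sb x K)).max'_mem hTne)
  have hδM_lt : Sb x K δM < Sb x K ε := by
    rw [hT] at hδMT; exact (Finset.mem_filter.mp hδMT).2
  have hδM_ne : δM ≠ ε := fun h => absurd (h ▸ hδM_lt) (lt_irrefl _)
  have hMgap : Sb x K δM + Tl x K < Sb x K ε := by
    rcases gap_symm hpos hsum hterm hδM_ne with h | h
    · linarith
    · exact h
  have hε'M : Sb x K ε' ≤ Sb x K δM := by
    rw [hδM]; exact Finset.le_max' _ _ (Finset.mem_image_of_mem _ hε'T)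
  set t := (Sb x K δM + Tl x K + Sb x K ε) / 2 with ht_def
  have ht1 : Sb x K δM + Tl x K < t := by rw [ht_def]; linarith
  have ht2 : t < Sb x K ε := by rw [ht_def]; linarith
  have htC : t ∈ C := hord.out hmemε' hmemε ⟨by linarith, ht2.le⟩
  obtain ⟨δ, hδ1, hδ2⟩ := coverage hpos hsum (hsub htC)
  rcases lt_or_ge (Sb x K δ) (Sb x K ε) with h | h
  · have hδT : δ ∈ T := by
      rw [hT]; simp only [Finset.mem_filter, Finset.mem_univ, true_and]; exact h
    have : Sb x K δ ≤ Sb x K δM := by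
      rw [hδM]; exact Finset.le_max' _ _ (Finset.mem_image_of_mem _ hδT)
    linarith
  · linarith

end SubsumsAux

open SubsumsAux in
/-- If the first `K` terms of a non-increasing summable positive sequence each exceed
their tails, the `2^K` intervals `J_ε = [∑ ε_i x_i, ∑ ε_i x_i + X_K]` are pairwise
disjoint, each meets the subsum set, and the subsum set has at least `2^K` connected
components. -/
theorem subsums_at_least_two_pow_components (x : ℕ → ℝ)
    (hpos : ∀ i, 0 < x i) (hsum : Summable x) (hmono : Antitone x)
    (K : ℕ) (hterm : ∀ n, n < K → x n > ∑' k, x (n + 1 + k)) :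
    (Pairwise fun (ε ε' : Fin K → Bool) =>
      Disjoint
        (Set.Icc (∑ i : Fin K, if ε i then x i else 0)
          ((∑ i : Fin K, if ε i then x i else 0) + ∑' k, x (K + k)))
        (Set.Icc (∑ i : Fin K, if ε' i then x i else 0)
          ((∑ i : Fin K, if ε' i then x i else 0) + ∑' k, x (K + k)))) ∧
    (∀ ε : Fin K → Bool,
      (Set.Icc (∑ i : Fin K, if ε i then x i else 0)
        ((∑ i : Fin K, if ε i then x i else 0) + ∑' k, x (K + k)) ∩ subsums x).Nonempty) ∧
    Function.Injective (fun ε : Fin K → Bool =>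
      connectedComponentIn (subsums x) (∑ i : Fin K, if ε i then x i else 0)) := by
  have hXK : 0 ≤ Tl x K := tail_nonneg hpos K
  refine ⟨?_, ?_, ?_⟩
  · intro ε ε' hne
    rcases gap_symm hpos hsum hterm hne with h | h <;>
      · rw [Set.disjoint_left]
        intro z hz hz'
        have h1 := hz.1; have h2 := hz.2; have h3 := hz'.1; have h4 := hz'.2
        change Sb x K _ ≤ z at h1 h3
        change z ≤ Sb x K _ + Tl x K at h2 h4
        linarith
  · intro ε
    exact ⟨Sb x K ε, ⟨le_rfl, le_add_of_nonneg_right hXK⟩, Sb_mem_subsums ε⟩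
  · intro ε ε' heq
    by_contra hne
    rcases gap_symm hpos hsum hterm hne with h | h
    · exact comp_ne hpos hsum hterm h heq
    · exact comp_ne hpos hsum hterm h heq.symm
end

section
/- Let (x_i) be a non-increasing summable sequence of positive reals. If x_n > X_n := ∑_{k>n} x_k for infinitely many n, then the subsum set Σ has infinitely many connected components. -/
lemma x_mem_subsums (x : ℕ → ℝ) (n : ℕ) : x n ∈ subsums x := by
  refine ⟨{n}, hasSum_subtype_iff_indicator.mpr ?_⟩
  have h : HasSum (fun i => if i = n then x n else 0) (x n) := hasSum_ite_eq n (x n)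
  convert h using 1
  funext i
  simp only [Set.indicator_apply, Set.mem_singleton_iff]
  split_ifs with hh
  · subst hh; rfl
  · rfl

lemma gap_lemma (x : ℕ → ℝ) (hpos : ∀ i, 0 < x i) (hsum : Summable x) (hmono : Antitone x)
    (n : ℕ) {s : ℝ} (hs : s ∈ subsums x) :
    s ≤ ∑' k, x (n + 1 + k) ∨ x n ≤ s := by
  obtain ⟨A, hA⟩ := hs
  by_cases hc : ∃ m ∈ A, m ≤ n
  · obtain ⟨m, hm, hmn⟩ := hc
    exact Or.inr ((hmono hmn).trans (le_hasSum hA ⟨m, hm⟩ fun _ _ => (hpos _).le))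
  · push_neg at hc
    left
    rw [← hA.tsum_eq]
    refine Summable.tsum_le_tsum_of_inj (fun a : A => (a : ℕ) - (n + 1)) ?_ (fun c _ => (hpos _).le)
      ?_ hA.summable (hsum.comp_injective fun a b h => by omega)
    · intro a b h
      have ha := hc a a.2
      have hb := hc b b.2
      exact Subtype.ext (by simp only at h; omega)
    · intro b
      have hb := hc b b.2
      have : n + 1 + ((b : ℕ) - (n + 1)) = (b : ℕ) := by omega
      rw [this]

/-- If the term exceeds the tail infinitely often for a non-increasing summable positive
sequence, the subsum set has infinitely many connected components. -/
theorem subsums_infinitely_many_components (x : ℕ → ℝ)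
    (hpos : ∀ i, 0 < x i) (hsum : Summable x) (hmono : Antitone x)
    (hterm : ∀ N, ∃ n, N ≤ n ∧ x n > ∑' k, x (n + 1 + k)) :
    {s : Set ℝ | ∃ r ∈ subsums x, s = connectedComponentIn (subsums x) r}.Infinite := by
  classical
  choose f hf1 hf2 using hterm
  set Sx := subsums x with hS
  -- recursively pick indices
  let n : ℕ → ℕ := fun k => Nat.rec (f 0) (fun _ m => f (m + 1)) k
  have hn0 : n 0 = f 0 := rfl
  have hnsucc : ∀ k, n (k + 1) = f (n k + 1) := fun k => rfl
  have hgap : ∀ k, x (n k) > ∑' j, x (n k + 1 + j) := by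
    intro k
    cases k with
    | zero => exact hf2 0
    | succ m => rw [hnsucc m]; exact hf2 (n m + 1)
  have hmono' : StrictMono n := strictMono_nat_of_lt_succ fun k => by
    have := hf1 (n k + 1)
    rw [hnsucc k]; omega
  -- key claim: for k < l, x (n l) ≤ tail (n k)
  have hle : ∀ k l, k < l → x (n l) ≤ ∑' j, x (n k + 1 + j) := by
    intro k l hkl
    have h1 : n k < n l := hmono' hkl
    have hsum' : Summable (fun j => x (n k + 1 + j)) :=
      hsum.comp_injective fun a b h => by omega
    have := Summable.le_tsum hsum' (n l - (n k + 1)) fun j _ => (hpos _).le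
    have he : n k + 1 + (n l - (n k + 1)) = n l := by omega
    rwa [he] at this
  set g : ℕ → Set ℝ := fun k => connectedComponentIn Sx (x (n k)) with hg
  have hmem : ∀ k, x (n k) ∈ Sx := fun k => x_mem_subsums x (n k)
  have hne : ∀ k l, k < l → g k ≠ g l := by
    intro k l hkl hEq
    set X := ∑' j, x (n k + 1 + j) with hX
    have hXa : X < x (n k) := hgap k
    set t : ℝ := (X + x (n k)) / 2 with ht
    have ht1 : X < t := by rw [ht]; linarith
    have ht2 : t < x (n k) := by rw [ht]; linarith
    have hbX : x (n l) ≤ X := hle k l hkl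
    -- the component
    have hC : IsPreconnected (g k) := (isPreconnected_connectedComponentIn)
    have hOrd : Set.OrdConnected (g k) := hC.ordConnected
    have hak : x (n k) ∈ g k := mem_connectedComponentIn (hmem k)
    have hal : x (n l) ∈ g k := by
      rw [hEq]; exact mem_connectedComponentIn (hmem l)
    have htmem : t ∈ g k := hOrd.out hal hak ⟨by linarith, ht2.le⟩
    have htS : t ∈ Sx := connectedComponentIn_subset Sx (x (n k)) htmem
    rcases gap_lemma x hpos hsum hmono (n k) htS with h | h
    · rw [← hX] at h; linarith
    · linarith
  have hinj : Function.Injective g := by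
    intro k l h
    rcases lt_trichotomy k l with hlt | heq | hgt
    · exact absurd h (hne k l hlt)
    · exact heq
    · exact absurd h.symm (hne l k hgt)
  exact Set.infinite_of_injective_forall_mem hinj fun k => ⟨x (n k), hmem k, rfl⟩
end

section
/- Let (x_i) be a non-increasing summable sequence of positive reals. The subsum set Σ is a finite union of closed intervals if and only if x_n ≤ ∑_{k>n} x_k for all sufficiently large n (the tail eventually bounds the term). -/
open Set Filter Topology

variable {x : ℕ → ℝ}

lemma summable_shift_aux (hsum : Summable x) (n : ℕ) : Summable (fun k => x (n + k)) := by
  have := (summable_nat_add_iff n).2 hsum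
  simpa [add_comm] using this

/-- tail identity -/
lemma tail_eq_aux (hsum : Summable x) (n : ℕ) :
    ∑' k, x (n + k) = x n + ∑' k, x (n + 1 + k) := by
  rw [Summable.tsum_eq_zero_add (summable_shift_aux hsum n)]
  simp only [add_zero]
  exact congrArg (HAdd.hAdd (x n)) (tsum_congr fun k => congrArg x (by omega))

/-- subset tail bound -/
lemma tsum_subset_le_aux (hnn : ∀ i, 0 ≤ x i) (hsum : Summable x) {N : ℕ} {A : Set ℕ}
    (hA : ∀ i ∈ A, N ≤ i) : ∑' i : A, x i ≤ ∑' k, x (N + k) := by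
  have hinj : Function.Injective (fun k : ℕ => N + k) := fun a b h => by
    dsimp only at h; omega
  have h1 : HasSum ((Set.Ici N).indicator x) (∑' k, x (N + k)) := by
    rw [← Function.Injective.hasSum_iff hinj (by
      intro c hc
      have hcN : c < N := by
        by_contra hcn
        exact hc ⟨c - N, by dsimp only; omega⟩
      simp [Set.indicator_apply, Set.mem_Ici, not_le.mpr hcN])]
    have h2 : HasSum (fun k => x (N + k)) (∑' k, x (N + k)) :=
      (summable_shift_aux hsum N).hasSum
    convert h2 using 1
    funext k
    simp [Set.indicator_apply, Set.mem_Ici]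
  rw [tsum_subtype, ← h1.tsum_eq]
  exact Summable.tsum_le_tsum
    (fun i => Set.indicator_le_indicator_of_subset (fun i hi => hA i hi) hnn i)
    (hsum.indicator A) h1.summable

lemma tsum_set_le_aux (hnn : ∀ i, 0 ≤ x i) (hsum : Summable x) (A : Set ℕ) :
    ∑' i : A, x i ≤ ∑' i, x i :=
  Summable.tsum_le_tsum_of_inj (Subtype.val) Subtype.val_injective (fun c _ => hnn c)
    (fun _ => le_rfl) (hsum.subtype A) hsum

lemma le_tsum_set_aux (hnn : ∀ i, 0 ≤ x i) (hsum : Summable x) {A : Set ℕ} {i : ℕ}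
    (hi : i ∈ A) : x i ≤ ∑' j : A, x j :=
  Summable.le_tsum (hsum.subtype A) ⟨i, hi⟩ (fun j _ => hnn j.1)

lemma tail_tendsto_aux (hsum : Summable x) :
    Tendsto (fun n => ∑' k, x (n + k)) atTop (𝓝 0) := by
  have := tendsto_sum_nat_add x
  simpa [add_comm] using this


noncomputable def greedySum (x : ℕ → ℝ) (t : ℝ) : ℕ → ℝ
  | 0 => 0
  | n + 1 => greedySum x t n + (if greedySum x t n + x n ≤ t then x n else 0)

lemma greedy_aux {x : ℕ → ℝ} (hnn : ∀ i, 0 ≤ x i) (hsum : Summable x)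
    (h : ∀ n, x n ≤ ∑' k, x (n + 1 + k)) {t : ℝ} (ht0 : 0 ≤ t) (hts : t ≤ ∑' k, x k) :
    ∃ A : Set ℕ, HasSum (fun i : A => x i) t := by
  classical
  set s := greedySum x t with hs
  set A : Set ℕ := {n | s n + x n ≤ t} with hA
  have hs0 : s 0 = 0 := rfl
  have hsucc : ∀ n, s (n + 1) = s n + (if s n + x n ≤ t then x n else 0) := fun n => rfl
  have hs_le : ∀ n, s n ≤ t := by
    intro n
    induction n with
    | zero => simpa [hs0] using ht0
    | succ n ih =>
      rw [hsucc]
      split_ifs with hc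
      · linarith
      · simpa using ih
  have hs_eq : ∀ n, s n = ∑ i ∈ Finset.range n, A.indicator x i := by
    intro n
    induction n with
    | zero => simp [hs0]
    | succ n ih =>
      rw [Finset.sum_range_succ, ← ih, hsucc]
      congr 1
  have hgap : ∀ n, t - s n ≤ ∑' k, x (n + k) := by
    intro n
    induction n with
    | zero => simpa [hs0] using hts
    | succ n ih =>
      rw [hsucc]
      by_cases hc : s n + x n ≤ t
      · rw [if_pos hc]
        have := tail_eq_aux hsum n
        have h2 : t - s n ≤ x n + ∑' k, x (n + 1 + k) := this ▸ ih
        linarith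
      · rw [if_neg hc]
        push_neg at hc
        calc t - (s n + 0) ≤ x n := by linarith
        _ ≤ ∑' k, x (n + 1 + k) := h n
  have hlim : Tendsto s atTop (𝓝 t) := by
    have hlow : Tendsto (fun n => t - ∑' k, x (n + k)) atTop (𝓝 t) := by
      simpa using (tendsto_const_nhds (x := t)).sub (tail_tendsto_aux hsum)
    exact tendsto_of_tendsto_of_tendsto_of_le_of_le hlow tendsto_const_nhds
      (fun n => by linarith [hgap n]) hs_le
  obtain ⟨L, hL⟩ := hsum.indicator A
  have hLt : L = t := by
    refine tendsto_nhds_unique ?_ hlim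
    have := hL.tendsto_sum_nat
    convert this using 1
    funext n
    exact hs_eq n
  subst hLt
  exact ⟨A, hasSum_subtype_iff_indicator.2 hL⟩


lemma hasSum_image_aux {x y : ℕ → ℝ} {B : Set ℕ} {f : ℕ → ℕ} (hf : Function.Injective f)
    (hxy : ∀ k, x (f k) = y k) {r : ℝ} (h : HasSum (fun k : B => y k) r) :
    HasSum (fun i : (f '' B) => x i) r := by
  rw [← (Equiv.Set.image f B hf).hasSum_iff]
  convert h using 1
  funext k
  simp [Equiv.Set.image, Equiv.Set.imageOfInjOn, hxy]

lemma singleton_mem_subsums_aux (x : ℕ → ℝ) (m : ℕ) : x m ∈ subsums x := by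
  refine ⟨{m}, ?_⟩
  rw [show (fun i : ({m} : Set ℕ) => x i) = (x ∘ (↑)) from rfl,
    hasSum_subtype_iff_indicator]
  convert hasSum_ite_eq m (x m) using 1
  funext n
  by_cases hn : n = m <;> simp [Set.indicator_apply, hn]

lemma zero_mem_subsums_aux (x : ℕ → ℝ) : 0 ∈ subsums x :=
  ⟨∅, hasSum_empty⟩

lemma gap_aux {x : ℕ → ℝ} (hnn : ∀ i, 0 ≤ x i) (hsum : Summable x) (hmono : Antitone x)
    (n : ℕ) {r : ℝ} (hr : r ∈ subsums x) : r ≤ ∑' k, x (n + 1 + k) ∨ x n ≤ r := by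
  obtain ⟨A, hA⟩ := hr
  have hr' : r = ∑' i : A, x i := hA.tsum_eq.symm
  by_cases hc : ∀ i ∈ A, n + 1 ≤ i
  · exact Or.inl (hr' ▸ tsum_subset_le_aux hnn hsum hc)
  · push_neg at hc
    obtain ⟨i, hiA, hin⟩ := hc
    exact Or.inr <| le_trans (hmono (by omega)) (hr' ▸ le_tsum_set_aux hnn hsum hiA)

/-- The subsum set of a non-increasing summable positive sequence is a finite union of
closed intervals if and only if the tail eventually bounds the term. -/
theorem subsums_finite_union_iff (x : ℕ → ℝ)
    (hpos : ∀ i, 0 < x i) (hsum : Summable x) (hmono : Antitone x) :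
    (∃ s : Finset (ℝ × ℝ), (∀ p ∈ s, p.1 ≤ p.2) ∧
        subsums x = ⋃ p ∈ s, Set.Icc p.1 p.2) ↔
      ∃ N, ∀ n, N ≤ n → x n ≤ ∑' k, x (n + 1 + k) := by
  classical
  have hnn : ∀ i, 0 ≤ x i := fun i => (hpos i).le
  constructor
  · rintro ⟨s, hs1, hs2⟩
    by_contra hcon
    push_neg at hcon
    have key : ∀ n, (∑' k, x (n + 1 + k) < x n) → ∃ p ∈ s, 0 < p.2 ∧ p.2 < x n := by
      intro n hn
      have hx1 : x (n + 1) ∈ subsums x := singleton_mem_subsums_aux x (n + 1)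
      rw [hs2] at hx1
      simp only [Set.mem_iUnion, Set.mem_Icc] at hx1
      obtain ⟨p, hps, hp1, hp2⟩ := hx1
      refine ⟨p, hps, lt_of_lt_of_le (hpos (n + 1)) hp2, ?_⟩
      set m := (∑' k, x (n + 1 + k) + x n) / 2 with hm
      have htail : x (n + 1) ≤ ∑' k, x (n + 1 + k) := by
        have h0 := Summable.le_tsum (summable_shift_aux hsum (n + 1)) 0 (fun j _ => hnn _)
        simpa using h0
      have hmnot : m ∉ subsums x := by
        intro hmem
        rcases gap_aux hnn hsum hmono n hmem with h1 | h1 <;>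
          · rw [hm] at h1; linarith
      by_contra hle
      push_neg at hle
      apply hmnot
      rw [hs2]
      refine Set.mem_iUnion.2 ⟨p, Set.mem_iUnion.2 ⟨hps, ?_, ?_⟩⟩
      · rw [hm]; linarith
      · rw [hm]; linarith
    obtain ⟨n0, _, hbad0⟩ := hcon 0
    obtain ⟨p0, hp0s, hp0pos, _⟩ := key n0 hbad0
    set s' : Finset ℝ := (s.filter (fun p => 0 < p.2)).image Prod.snd with hs'
    have hne : s'.Nonempty :=
      ⟨p0.2, Finset.mem_image.2 ⟨p0, Finset.mem_filter.2 ⟨hp0s, hp0pos⟩, rfl⟩⟩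
    set δ := s'.min' hne with hδ
    have hδpos : 0 < δ := by
      obtain ⟨p, hpf, hpe⟩ := Finset.mem_image.1 (s'.min'_mem hne)
      have h0 := (Finset.mem_filter.1 hpf).2
      rw [hδ, ← hpe]; exact h0
    have hev : ∀ᶠ n in Filter.atTop, x n < δ :=
      hsum.tendsto_atTop_zero.eventually (gt_mem_nhds hδpos)
    obtain ⟨M, hM⟩ := Filter.eventually_atTop.1 hev
    obtain ⟨n, hnM, hbad⟩ := hcon M
    obtain ⟨p, hps, hppos, hplt⟩ := key n hbad
    have h1 : δ ≤ p.2 :=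
      Finset.min'_le _ _ (Finset.mem_image.2 ⟨p, Finset.mem_filter.2 ⟨hps, hppos⟩, rfl⟩)
    have h2 : x n < δ := hM n hnM
    linarith
  · rintro ⟨N, hN⟩
    set y : ℕ → ℝ := fun k => x (N + k) with hy
    have hy_sum : Summable y := summable_shift_aux hsum N
    have hy_nn : ∀ k, 0 ≤ y k := fun k => hnn _
    have hy_h : ∀ k, y k ≤ ∑' j, y (k + 1 + j) := by
      intro k
      have h1 := hN (N + k) (Nat.le_add_right N k)
      calc y k = x (N + k) := rfl
        _ ≤ ∑' j, x (N + k + 1 + j) := h1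
        _ = ∑' j, y (k + 1 + j) := tsum_congr fun j => congrArg x (by omega)
    have hT0 : 0 ≤ ∑' k, y k := tsum_nonneg (fun k => hy_nn k)
    refine ⟨(Finset.range N).powerset.image
      (fun F => (∑ i ∈ F, x i, (∑ i ∈ F, x i) + ∑' k, y k)), ?_, ?_⟩
    · intro p hp
      obtain ⟨F, _, rfl⟩ := Finset.mem_image.1 hp
      simpa using hT0
    · ext r
      simp only [Set.mem_iUnion, Set.mem_Icc, Finset.mem_image, Finset.mem_powerset]
      constructor
      · rintro ⟨A, hA⟩
        set F : Finset ℕ := (Finset.range N).filter (· ∈ A) with hF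
        set B : Set ℕ := A ∩ {k | N ≤ k} with hB
        have hsplit : A = (↑F : Set ℕ) ∪ B := by
          ext i
          simp only [hF, hB, Finset.coe_filter, Finset.mem_range, Set.mem_union,
            Set.mem_setOf_eq, Set.mem_inter_iff]
          constructor
          · intro hi
            by_cases hiN : i < N
            · exact Or.inl ⟨hiN, hi⟩
            · exact Or.inr ⟨hi, by omega⟩
          · rintro (⟨_, hi⟩ | ⟨hi, _⟩) <;> exact hi
        have hdisj : Disjoint (↑F : Set ℕ) B := by
          rw [Set.disjoint_left]
          intro i hiF hiB
          have h1 : i ∈ Finset.range N := Finset.mem_of_mem_filter i hiF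
          have h2 : N ≤ i := hiB.2
          simp only [Finset.mem_range] at h1
          omega
        have hFsum : HasSum (x ∘ (↑) : (↑F : Set ℕ) → ℝ) (∑ i ∈ F, x i) := F.hasSum x
        have hb : HasSum (x ∘ (↑) : B → ℝ) (∑' i : B, x i) := (hsum.subtype B).hasSum
        have h2 := hFsum.add_disjoint hdisj hb
        rw [← hsplit] at h2
        have hr : r = ∑ i ∈ F, x i + ∑' i : B, x i := hA.unique h2
        have hb0 : 0 ≤ ∑' i : B, x i := tsum_nonneg (fun i => hnn _)
        have hbT : ∑' i : B, x i ≤ ∑' k, y k :=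
          tsum_subset_le_aux hnn hsum (fun i hi => hi.2)
        exact ⟨(∑ i ∈ F, x i, ∑ i ∈ F, x i + ∑' k, y k),
          ⟨F, Finset.filter_subset _ _, rfl⟩,
          by show (∑ i ∈ F, x i) ≤ r; linarith,
          by show r ≤ (∑ i ∈ F, x i) + ∑' k, y k; linarith⟩
      · rintro ⟨p, ⟨F, hFsub, rfl⟩, hr1, hr2⟩
        simp only at hr1 hr2
        obtain ⟨B', hB'⟩ := greedy_aux hy_nn hy_sum hy_h
          (t := r - ∑ i ∈ F, x i) (by linarith) (by linarith)
        set C : Set ℕ := (fun k => N + k) '' B' with hC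
        have hCsum : HasSum (fun i : C => x i) (r - ∑ i ∈ F, x i) :=
          hasSum_image_aux (fun a b hab => by omega)
            (fun k => rfl) hB'
        have hdisj : Disjoint (↑F : Set ℕ) C := by
          rw [Set.disjoint_left]
          intro i hiF hiC
          have h1 : i ∈ Finset.range N := hFsub hiF
          simp only [Finset.mem_range] at h1
          obtain ⟨k, _, hk⟩ := hiC
          have hk' : N + k = i := hk
          omega
        have hFsum : HasSum (x ∘ (↑) : (↑F : Set ℕ) → ℝ) (∑ i ∈ F, x i) := F.hasSum x
        have h2 := hFsum.add_disjoint hdisj hCsum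
        have h3 : ∑ i ∈ F, x i + (r - ∑ i ∈ F, x i) = r := by ring
        rw [h3] at h2
        exact ⟨↑F ∪ C, h2⟩
end

section
/- Let (x_i) be a non-increasing summable sequence of positive reals with x_n > X_n := ∑_{k>n} x_k for infinitely many n. Then 0 is a one-point connected component of the subsum set Σ; i.e. the connected component of Σ containing 0 is {0}. -/
/-- Gap lemma: no subsum lies strictly between the tail after `n` and `x n`. -/
lemma subsums_gap (x : ℕ → ℝ) (hpos : ∀ i, 0 < x i) (hsum : Summable x)
    (hmono : Antitone x) (n : ℕ) (r : ℝ) (hr : r ∈ subsums x)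
    (h1 : ∑' k, x (n + 1 + k) < r) (h2 : r < x n) : False := by
  obtain ⟨A, hA⟩ := hr
  by_cases hle : ∃ i ∈ A, i ≤ n
  · obtain ⟨i, hiA, hi⟩ := hle
    have hxi : x i ≤ r := le_hasSum hA ⟨i, hiA⟩ (fun j _ => (hpos j).le)
    have : x n ≤ x i := hmono hi
    linarith
  · push_neg at hle
    have hbig : ∀ b : A, n + 1 ≤ (b : ℕ) := fun b => hle b b.2
    have hg : Summable (fun k => x (n + 1 + k)) := by
      have := (summable_nat_add_iff (n + 1)).mpr hsum
      simpa [add_comm] using this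
    have hinj : Function.Injective (fun b : A => (b : ℕ) - (n + 1)) := by
      intro b1 b2 h
      have h1 := hbig b1
      have h2 := hbig b2
      ext
      simp only at h
      omega
    have hle2 : ∑' (b : A), x b ≤ ∑' k, x (n + 1 + k) := by
      refine Summable.tsum_le_tsum_of_inj _ hinj (fun c _ => (hpos _).le) ?_ hA.summable hg
      intro b
      have := hbig b
      have : n + 1 + ((b : ℕ) - (n + 1)) = (b : ℕ) := by omega
      rw [this]
    rw [hA.tsum_eq] at hle2
    linarith

/-- If the term exceeds the tail infinitely often, then `{0}` is the connected
component of `0` in the subsum set. -/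
theorem subsums_component_of_zero (x : ℕ → ℝ)
    (hpos : ∀ i, 0 < x i) (hsum : Summable x) (hmono : Antitone x)
    (hterm : ∀ N, ∃ n, N ≤ n ∧ x n > ∑' k, x (n + 1 + k)) :
    connectedComponentIn (subsums x) 0 = {0} := by
  have h0 : (0 : ℝ) ∈ subsums x := ⟨∅, by simpa using hasSum_empty⟩
  apply Set.eq_singleton_iff_unique_mem.mpr
  refine ⟨mem_connectedComponentIn h0, ?_⟩
  intro r hr
  by_contra hne
  have hrS : r ∈ subsums x := connectedComponentIn_subset _ _ hr
  have hrnn : 0 ≤ r := by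
    obtain ⟨A, hA⟩ := hrS
    exact hA.nonneg (fun i : A => (hpos i).le)
  have hrpos : 0 < r := lt_of_le_of_ne hrnn (Ne.symm hne)
  have hx0 : Filter.Tendsto x Filter.atTop (nhds 0) := hsum.tendsto_atTop_zero
  obtain ⟨N, hN⟩ := (hx0.eventually (gt_mem_nhds hrpos)).exists
  obtain ⟨n, hnN, hxn⟩ := hterm N
  set T := ∑' k, x (n + 1 + k) with hT
  have hT0 : 0 ≤ T := tsum_nonneg (fun k => (hpos _).le)
  set t := (T + x n) / 2 with ht
  have ht1 : T < t := by simp only [ht]; linarith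
  have ht2 : t < x n := by simp only [ht]; linarith
  have htr : t < r := ht2.trans ((hmono hnN).trans_lt hN)
  have htmem : t ∈ subsums x := by
      have hconn : IsPreconnected (connectedComponentIn (subsums x) 0) :=
        isPreconnected_connectedComponentIn
      have hord := hconn.ordConnected
      have : t ∈ connectedComponentIn (subsums x) 0 :=
        hord.out (mem_connectedComponentIn h0) hr ⟨by linarith, htr.le⟩
      exact connectedComponentIn_subset _ _ this
  exact subsums_gap x hpos hsum hmono n t htmem ht1 ht2
end

section
/- For p > 1, the subsum set of the p-sequence x_k = 1/k^p is a finite union of disjoint closed intervals; in particular, for every p > 1 there exists N such that 1/n^p ≤ ∑_{k>n} 1/k^p for all n > N. -/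
open Set Filter Topology

lemma icc_merge {a b c d z : ℝ} (hz1 : z ∈ Set.Icc a b) (hz2 : z ∈ Set.Icc c d) :
    Set.Icc a b ∪ Set.Icc c d = Set.Icc (min a c) (max b d) := by
  ext t
  constructor
  · rintro (ht | ht)
    · exact ⟨le_trans (min_le_left _ _) ht.1, le_trans ht.2 (le_max_left _ _)⟩
    · exact ⟨le_trans (min_le_right _ _) ht.1, le_trans ht.2 (le_max_right _ _)⟩
  · rintro ⟨h1, h2⟩
    rcases le_total t z with htz | htz
    · rcases min_cases a c with ⟨hm, _⟩ | ⟨hm, _⟩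
      · exact Or.inl ⟨hm ▸ h1, le_trans htz hz1.2⟩
      · exact Or.inr ⟨hm ▸ h1, le_trans htz hz2.2⟩
    · rcases max_cases b d with ⟨hm, _⟩ | ⟨hm, _⟩
      · exact Or.inl ⟨le_trans hz1.1 htz, hm ▸ h2⟩
      · exact Or.inr ⟨le_trans hz2.1 htz, hm ▸ h2⟩

lemma disjointify_aux : ∀ (n : ℕ) (s : Finset (ℝ × ℝ)), s.card ≤ n → (∀ q ∈ s, q.1 ≤ q.2) →
    ∃ t : Finset (ℝ × ℝ), (∀ q ∈ t, q.1 ≤ q.2) ∧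
      (Set.Pairwise ↑t fun (q q' : ℝ × ℝ) => Disjoint (Set.Icc q.1 q.2) (Set.Icc q'.1 q'.2)) ∧
      (⋃ q ∈ t, Set.Icc q.1 q.2) = ⋃ q ∈ s, Set.Icc q.1 q.2 := by
  intro n
  induction n with
  | zero =>
    intro s hc _
    refine ⟨∅, by simp, by simp, ?_⟩
    rw [Finset.card_eq_zero.mp (Nat.le_zero.mp hc)]
  | succ n ih =>
    intro s hc hle
    by_cases hdisj : Set.Pairwise ↑s fun (q q' : ℝ × ℝ) => Disjoint (Set.Icc q.1 q.2) (Set.Icc q'.1 q'.2)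
    · exact ⟨s, hle, hdisj, rfl⟩
    · rw [Set.Pairwise] at hdisj
      push_neg at hdisj
      obtain ⟨a, ha, b, hb, hab, hnd⟩ := hdisj
      rw [Set.not_disjoint_iff] at hnd
      obtain ⟨z, hz1, hz2⟩ := hnd
      simp only [Finset.mem_coe] at ha hb
      set m : ℝ × ℝ := (min a.1 b.1, max a.2 b.2) with hm
      set u : Finset (ℝ × ℝ) := (s.erase a).erase b with hu
      have hbu : b ∈ s.erase a := Finset.mem_erase.mpr ⟨fun h => hab h.symm, hb⟩
      have hcard : (insert m u).card ≤ n := by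
        have h1 : u.card = s.card - 2 := by
          rw [hu, Finset.card_erase_of_mem hbu, Finset.card_erase_of_mem ha]; omega
        have h2 : 2 ≤ s.card := Finset.one_lt_card.mpr ⟨a, ha, b, hb, hab⟩
        have := Finset.card_insert_le m u
        omega
      have hle' : ∀ q ∈ insert m u, q.1 ≤ q.2 := by
        intro q hq
        rcases Finset.mem_insert.mp hq with h | h
        · subst h
          exact le_trans (min_le_left _ _) (le_trans (hle a ha) (le_max_left _ _))
        · exact hle q (Finset.mem_of_mem_erase (Finset.mem_of_mem_erase h))
      obtain ⟨t, ht1, ht2, ht3⟩ := ih (insert m u) hcard hle'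
      refine ⟨t, ht1, ht2, ?_⟩
      rw [ht3]
      have hs : s = insert a (insert b u) := by
        rw [hu, Finset.insert_erase hbu, Finset.insert_erase ha]
      rw [Finset.set_biUnion_insert]
      conv_rhs => rw [hs, Finset.set_biUnion_insert, Finset.set_biUnion_insert]
      rw [← Set.union_assoc, ← icc_merge hz1 hz2]


open Classical in
noncomputable def greedy (x : ℕ → ℝ) (N : ℕ) (r : ℝ) : ℕ → Finset ℕ
  | 0 => ∅
  | n + 1 =>
    if N ≤ n ∧ (∑ m ∈ greedy x N r n, x m) + x n ≤ r then insert n (greedy x N r n)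
    else greedy x N r n

lemma greedy_subset_range (x : ℕ → ℝ) (N : ℕ) (r : ℝ) : ∀ n, greedy x N r n ⊆ Finset.range n := by
  intro n
  induction n with
  | zero => simp [greedy]
  | succ n ih =>
    rw [greedy]
    split
    · intro m hm
      rcases Finset.mem_insert.mp hm with h | h
      · simp [h]
      · exact Finset.range_subset_range.mpr (Nat.le_succ n) (ih h)
    · exact fun m hm => Finset.range_subset_range.mpr (Nat.le_succ n) (ih hm)

lemma greedy_mono (x : ℕ → ℝ) (N : ℕ) (r : ℝ) (n : ℕ) : greedy x N r n ⊆ greedy x N r (n+1) := by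
  show greedy x N r n ⊆ greedy x N r (n+1)
  rw [greedy]
  split
  · exact Finset.subset_insert _ _
  · exact subset_rfl

lemma greedy_mem_iff (x : ℕ → ℝ) (N : ℕ) (r : ℝ) :
    ∀ n m, m ∈ greedy x N r n ↔ m < n ∧ m ∈ greedy x N r (m+1) := by
  intro n
  induction n with
  | zero => simp [greedy]
  | succ n ih =>
    intro m
    constructor
    · intro hm
      have hlt : m < n + 1 := Finset.mem_range.mp (greedy_subset_range x N r (n+1) hm)
      refine ⟨hlt, ?_⟩
      rcases Nat.lt_succ_iff_lt_or_eq.mp hlt with h | h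
      · refine ((ih m).mp ?_).2
        rw [greedy] at hm
        split at hm
        · rcases Finset.mem_insert.mp hm with h' | h'
          · omega
          · exact h'
        · exact hm
      · exact h ▸ hm
    · rintro ⟨hlt, hmem⟩
      rcases Nat.lt_succ_iff_lt_or_eq.mp hlt with h | h
      · exact greedy_mono x N r n ((ih m).mpr ⟨h, hmem⟩)
      · exact h ▸ hmem

lemma greedy_zero (x : ℕ → ℝ) (N : ℕ) (r : ℝ) : greedy x N r 0 = ∅ := by rw [greedy]

lemma greedy_succ (x : ℕ → ℝ) (N : ℕ) (r : ℝ) (n : ℕ) : greedy x N r (n+1) =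
    if N ≤ n ∧ (∑ m ∈ greedy x N r n, x m) + x n ≤ r then insert n (greedy x N r n)
    else greedy x N r n := by rw [greedy]

lemma greedy_hasSum (x : ℕ → ℝ) (hx0 : ∀ k, 0 ≤ x k) (hsum : Summable x) (N : ℕ)
    (hkey : ∀ n, N ≤ n → x n ≤ ∑' k, x (n + 1 + k)) (r : ℝ)
    (hr0 : 0 ≤ r) (hrL : r ≤ ∑' k, x (N + k)) :
    ∃ A : Set ℕ, A ⊆ Set.Ici N ∧ HasSum (A.indicator x) r := by
  classical
  set A : Set ℕ := {m | m ∈ greedy x N r (m+1)} with hA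
  set f : ℕ → ℝ := fun n => ∑ m ∈ greedy x N r n, x m with hf
  set T : ℕ → ℝ := fun n => ∑' k, x (n + k) with hT
  have hs : ∀ n, Summable fun k => x (n + k) := fun n => by
    simpa [Nat.add_comm] using (summable_nat_add_iff (f := x) n).2 hsum
  have hT0 : ∀ n, 0 ≤ T n := fun n => tsum_nonneg fun k => hx0 _
  have hT_succ : ∀ n, T n = x n + T (n+1) := by
    intro n
    have h := Summable.tsum_eq_zero_add (hs n)
    have h2 : (fun k => x (n + (k + 1))) = fun k => x (n + 1 + k) := by
      funext k; congr 1; omega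
    rw [h2] at h
    simpa using h
  -- f n ≤ r and the step dichotomy
  have hnotmem : ∀ n, n ∉ greedy x N r n := fun n h =>
    absurd (Finset.mem_range.mp (greedy_subset_range x N r n h)) (lt_irrefl n)
  have hstep : ∀ n, N ≤ n →
      (f (n+1) = f n + x n ∧ f n + x n ≤ r) ∨ (f (n+1) = f n ∧ r < f n + x n) := by
    intro n hn
    by_cases hc : (∑ m ∈ greedy x N r n, x m) + x n ≤ r
    · left
      constructor
      · show (∑ m ∈ greedy x N r (n+1), x m) = (∑ m ∈ greedy x N r n, x m) + x n
        rw [greedy_succ x N r n, if_pos ⟨hn, hc⟩, Finset.sum_insert (hnotmem n), add_comm]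
      · exact hc
    · right
      constructor
      · show (∑ m ∈ greedy x N r (n+1), x m) = (∑ m ∈ greedy x N r n, x m)
        rw [greedy_succ x N r n, if_neg (fun h => hc h.2)]
      · exact not_le.mp hc
  have hg_empty : ∀ n, n ≤ N → greedy x N r n = ∅ := by
    intro n hn
    induction n with
    | zero => exact greedy_zero x N r
    | succ n ih =>
      rw [greedy_succ x N r n, if_neg, ih (le_of_lt hn)]
      rintro ⟨h1, -⟩
      omega
  have hfN : f N = 0 := by rw [hf]; simp [hg_empty N le_rfl]
  have hfr : ∀ n, N ≤ n → f n ≤ r := by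
    intro n hn
    induction n, hn using Nat.le_induction with
    | base => rw [hfN]; exact hr0
    | succ n hn ih =>
      rcases hstep n hn with ⟨h1, h2⟩ | ⟨h1, _⟩
      · rw [h1]; exact h2
      · rw [h1]; exact ih
  have hinv : ∀ n, N ≤ n → r - f n ≤ T n := by
    intro n hn
    induction n, hn using Nat.le_induction with
    | base => rw [hfN]; simpa using hrL
    | succ n hn ih =>
      rcases hstep n hn with ⟨h1, _⟩ | ⟨h1, h2⟩
      · rw [h1]
        have := hT_succ n
        have hx : x n ≤ x n := le_rfl
        linarith [ih]
      · rw [h1]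
        have hk := hkey n hn
        linarith
  have hTtend : Filter.Tendsto T Filter.atTop (nhds 0) := by
    have h := tendsto_sum_nat_add x
    have : T = fun i => ∑' k, x (k + i) := by
      funext i
      rw [hT]
      simp [Nat.add_comm]
    rw [this]
    exact h
  have hftend : Filter.Tendsto f Filter.atTop (nhds r) := by
    refine tendsto_of_tendsto_of_tendsto_of_le_of_le'
      (g := fun n => r - T n) (h := fun _ => r) ?_ tendsto_const_nhds ?_ ?_
    · simpa using tendsto_const_nhds.sub hTtend
    · exact Filter.eventually_atTop.mpr ⟨N, fun n hn => by show r - T n ≤ f n; linarith [hinv n hn]⟩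
    · exact Filter.eventually_atTop.mpr ⟨N, fun n hn => hfr n hn⟩
  -- convert to indicator sums
  have hAsub : A ⊆ Set.Ici N := by
    intro m hm
    rw [hA, Set.mem_setOf_eq, greedy_succ x N r m] at hm
    split at hm
    · next h => exact h.1
    · exact absurd hm (hnotmem m)
  have hgfilter : ∀ n, greedy x N r n = (Finset.range n).filter (· ∈ A) := by
    intro n
    ext m
    rw [greedy_mem_iff x N r n m, Finset.mem_filter, Finset.mem_range]
    rfl
  have hfind : ∀ n, f n = ∑ m ∈ Finset.range n, A.indicator x m := by
    intro n
    show (∑ m ∈ greedy x N r n, x m) = _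
    rw [hgfilter n, Finset.sum_indicator_eq_sum_filter]
  have hysum : Summable (A.indicator x) := hsum.indicator A
  have hytend := hysum.hasSum.tendsto_sum_nat
  have : (fun n => ∑ m ∈ Finset.range n, A.indicator x m) = f := by
    funext n; rw [hfind n]
  rw [this] at hytend
  have := tendsto_nhds_unique hytend hftend
  exact ⟨A, hAsub, this ▸ hysum.hasSum⟩

/-- For `p > 1`, the subsum set of the `p`-sequence `1/k^p` (`k ≥ 1`) is a finite union
of disjoint closed intervals; in particular the tail eventually bounds the term. -/
theorem subsums_p_sequence (p : ℝ) (hp : 1 < p)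
    (x : ℕ → ℝ) (hx : ∀ k, x k = 1 / ((k : ℝ) + 1) ^ p) :
    (∃ N, ∀ n, N ≤ n → x n ≤ ∑' k, x (n + 1 + k)) ∧
      ∃ s : Finset (ℝ × ℝ), (∀ p' ∈ s, p'.1 ≤ p'.2) ∧
        (Set.Pairwise ↑s fun (p' q : ℝ × ℝ) => Disjoint (Set.Icc p'.1 p'.2) (Set.Icc q.1 q.2)) ∧
        subsums x = ⋃ p' ∈ s, Set.Icc p'.1 p'.2 := by
  classical
  have hp0 : 0 ≤ p := le_of_lt (lt_trans one_pos hp)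
  have hx0 : ∀ k, 0 < x k := by
    intro k
    rw [hx k]
    positivity
  have hsum : Summable x := by
    have h1 : Summable (fun n : ℕ => 1 / (n : ℝ) ^ p) := Real.summable_one_div_nat_rpow.2 hp
    have h2 := (summable_nat_add_iff (f := fun n : ℕ => 1 / (n : ℝ) ^ p) 1).2 h1
    refine h2.congr fun k => ?_
    rw [hx k]
    push_cast
    rfl
  have hs : ∀ m, Summable fun k => x (m + k) := fun m => by
    simpa [Nat.add_comm] using (summable_nat_add_iff (f := x) m).2 hsum
  set N : ℕ := ⌈(2:ℝ) ^ p⌉₊ with hN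
  have hkey : ∀ n, N ≤ n → x n ≤ ∑' k, x (n + 1 + k) := by
    intro n hn
    have h2p : (2:ℝ) ^ p ≤ (n : ℝ) := (Nat.ceil_le.mp hn)
    set c : ℝ := (n : ℝ) + 1 with hc
    have hc0 : 0 < c := by positivity
    have h2pc : (2:ℝ) ^ p ≤ c := le_trans h2p (by simp [hc])
    have hterm : ∀ k ∈ Finset.range (n + 1), 1 / (2 * c) ^ p ≤ x (n + 1 + k) := by
      intro k hk
      have hkn : (k : ℝ) ≤ (n : ℝ) := by
        exact_mod_cast Nat.lt_succ_iff.mp (Finset.mem_range.mp hk)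
      rw [hx (n + 1 + k)]
      have hd : ((n + 1 + k : ℕ) : ℝ) + 1 ≤ 2 * c := by push_cast; rw [hc]; linarith
      have hd0 : (0:ℝ) < ((n + 1 + k : ℕ) : ℝ) + 1 := by positivity
      have hpow : (((n + 1 + k : ℕ) : ℝ) + 1) ^ p ≤ (2 * c) ^ p :=
        Real.rpow_le_rpow (le_of_lt hd0) hd hp0
      exact one_div_le_one_div_of_le (by positivity) hpow
    have hsum_lb : ((n : ℝ) + 1) * (1 / (2 * c) ^ p) ≤ ∑ k ∈ Finset.range (n + 1), x (n + 1 + k) := by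
      calc ((n : ℝ) + 1) * (1 / (2 * c) ^ p)
          = ∑ _k ∈ Finset.range (n + 1), 1 / (2 * c) ^ p := by
            rw [Finset.sum_const, nsmul_eq_mul, Finset.card_range]
            push_cast
            ring
        _ ≤ _ := Finset.sum_le_sum hterm
    have hfin : ∑ k ∈ Finset.range (n + 1), x (n + 1 + k) ≤ ∑' k, x (n + 1 + k) :=
      Summable.sum_le_tsum _ (fun k _ => le_of_lt (hx0 _)) (hs (n + 1))
    have hxn : x n ≤ ((n : ℝ) + 1) * (1 / (2 * c) ^ p) := by
      rw [hx n]
      rw [Real.mul_rpow (by norm_num) (le_of_lt hc0)]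
      have hcp : (0:ℝ) < c ^ p := by positivity
      have h2pp : (0:ℝ) < (2:ℝ) ^ p := by positivity
      rw [div_le_iff₀ (by positivity)]
      have : ((n:ℝ) + 1) * (1 / ((2:ℝ) ^ p * c ^ p)) * c ^ p = c / (2:ℝ) ^ p := by
        rw [hc]; field_simp
      rw [this, le_div_iff₀ h2pp, one_mul]
      exact h2pc
    linarith
  refine ⟨⟨N, hkey⟩, ?_⟩
  set L : ℝ := ∑' k, x (N + k) with hL
  have hL0 : 0 ≤ L := tsum_nonneg fun k => le_of_lt (hx0 _)
  -- HasSum of the Ici N indicator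
  have hIci : HasSum ((Set.Ici N).indicator x) L := by
    have h1 : HasSum (fun k => x (N + k)) L := (hs N).hasSum
    have h1' : HasSum (fun k => (Set.Ici N).indicator x (k + N)) L := by
      have he : (fun k => (Set.Ici N).indicator x (k + N)) = fun k => x (N + k) := by
        funext k
        rw [Set.indicator_of_mem (by simp : k + N ∈ Set.Ici N)]
        congr 1
        omega
      rw [he]
      exact h1
    have h2 := (hasSum_nat_add_iff (f := (Set.Ici N).indicator x) N).mp h1'
    have h3 : ∑ i ∈ Finset.range N, (Set.Ici N).indicator x i = 0 := by
      refine Finset.sum_eq_zero fun i hi => ?_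
      exact Set.indicator_of_notMem (by simpa using Finset.mem_range.mp hi) x
    rwa [h3, add_zero] at h2
  set s0 : Finset (ℝ × ℝ) :=
    ((Finset.range N).powerset).image (fun F => (∑ i ∈ F, x i, (∑ i ∈ F, x i) + L)) with hs0
  have hsubs : subsums x = ⋃ q ∈ s0, Set.Icc q.1 q.2 := by
    ext r
    constructor
    · rintro ⟨A, hA⟩
      have hA' : HasSum (A.indicator x) r := hasSum_subtype_iff_indicator.mp hA
      set A1 : Set ℕ := A ∩ {m | m < N} with hA1
      set A2 : Set ℕ := A ∩ {m | N ≤ m} with hA2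
      have hunion : A1 ∪ A2 = A := by
        ext m
        simp only [hA1, hA2, Set.mem_union, Set.mem_inter_iff, Set.mem_setOf_eq]
        constructor
        · rintro (⟨h, -⟩ | ⟨h, -⟩) <;> exact h
        · intro h
          rcases lt_or_ge m N with h' | h'
          · exact Or.inl ⟨h, h'⟩
          · exact Or.inr ⟨h, h'⟩
      have hdisj12 : Disjoint A1 A2 := by
        rw [Set.disjoint_left]
        rintro m ⟨-, h1⟩ ⟨-, h2⟩
        simp only [Set.mem_setOf_eq] at h1 h2
        omega
      set F : Finset ℕ := (Finset.range N).filter (· ∈ A) with hF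
      have h1 : HasSum (A1.indicator x) (∑ i ∈ F, x i) := by
        have h0 : ∀ b ∉ F, A1.indicator x b = 0 := by
          intro b hb
          refine Set.indicator_of_notMem (fun hbA1 => ?_) x
          rw [hA1, Set.mem_inter_iff, Set.mem_setOf_eq] at hbA1
          exact hb (Finset.mem_filter.mpr ⟨Finset.mem_range.mpr hbA1.2, hbA1.1⟩)
        have hsum1 : HasSum (A1.indicator x) (∑ b ∈ F, A1.indicator x b) :=
          hasSum_sum_of_ne_finset_zero h0
        have heq : ∑ b ∈ F, A1.indicator x b = ∑ b ∈ F, x b := by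
          refine Finset.sum_congr rfl fun b hb => ?_
          have hb' := Finset.mem_filter.mp hb
          refine Set.indicator_of_mem ?_ x
          rw [hA1, Set.mem_inter_iff, Set.mem_setOf_eq]
          exact ⟨hb'.2, Finset.mem_range.mp hb'.1⟩
        rwa [heq] at hsum1
      have h2summ : Summable (A2.indicator x) := hsum.indicator A2
      have hsplit : A.indicator x = fun m => A1.indicator x m + A2.indicator x m := by
        rw [← hunion]
        exact Set.indicator_union_of_disjoint hdisj12 x
      have h2 : HasSum (A2.indicator x) (r - ∑ i ∈ F, x i) := by
        have hsub := hA'.sub h1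
        have he : (fun m => A.indicator x m - A1.indicator x m) = A2.indicator x := by
          funext m
          rw [congrFun hsplit m]
          ring
        rwa [he] at hsub
      have h20 : 0 ≤ r - ∑ i ∈ F, x i := by
        rw [← h2.tsum_eq]
        exact tsum_nonneg fun m => Set.indicator_nonneg (fun k _ => le_of_lt (hx0 k)) m
      have h2L : r - ∑ i ∈ F, x i ≤ L := by
        rw [← h2.tsum_eq, ← hIci.tsum_eq]
        refine Summable.tsum_le_tsum ?_ h2summ hIci.summable
        intro m
        refine Set.indicator_le_indicator_of_subset ?_ (fun k => le_of_lt (hx0 k)) m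
        intro a ha
        rw [hA2, Set.mem_inter_iff, Set.mem_setOf_eq] at ha
        exact ha.2
      simp only [Set.mem_iUnion]
      refine ⟨(∑ i ∈ F, x i, (∑ i ∈ F, x i) + L), ?_,
        Set.mem_Icc.mpr ⟨by dsimp only; linarith, by dsimp only; linarith⟩⟩
      rw [hs0]
      exact Finset.mem_image.mpr ⟨F, Finset.mem_powerset.mpr (Finset.filter_subset _ _), rfl⟩
    · intro hr
      simp only [Set.mem_iUnion, hs0, Finset.mem_image, Finset.mem_powerset] at hr
      obtain ⟨q, ⟨F, hFsub, hq⟩, hrq⟩ := hr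
      rw [← hq] at hrq
      obtain ⟨hr1, hr2⟩ := hrq
      dsimp only at hr1 hr2
      obtain ⟨A2, hA2sub, hA2⟩ := greedy_hasSum x (fun k => le_of_lt (hx0 k)) hsum N hkey
        (r - ∑ i ∈ F, x i) (by linarith) (by rw [← hL]; linarith)
      have h1 : HasSum ((↑F : Set ℕ).indicator x) (∑ i ∈ F, x i) := by
        have h0 : ∀ b ∉ F, (↑F : Set ℕ).indicator x b = 0 := fun b hb =>
          Set.indicator_of_notMem (by simpa using hb) x
        have hsum1 : HasSum ((↑F : Set ℕ).indicator x) (∑ b ∈ F, (↑F : Set ℕ).indicator x b) :=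
          hasSum_sum_of_ne_finset_zero h0
        have heq : ∑ b ∈ F, (↑F : Set ℕ).indicator x b = ∑ b ∈ F, x b :=
          Finset.sum_congr rfl fun b hb => Set.indicator_of_mem (by simpa using hb) x
        rwa [heq] at hsum1
      have hdisj : Disjoint (↑F : Set ℕ) A2 := by
        rw [Set.disjoint_left]
        intro m hmF hmA2
        have h1' : m < N := Finset.mem_range.mp (hFsub (by simpa using hmF))
        have h2' : N ≤ m := hA2sub hmA2
        omega
      have hadd := h1.add hA2
      have he : (fun m => (↑F : Set ℕ).indicator x m + A2.indicator x m)
          = ((↑F : Set ℕ) ∪ A2).indicator x := (Set.indicator_union_of_disjoint hdisj x).symm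
      rw [he, add_sub_cancel] at hadd
      exact ⟨(↑F : Set ℕ) ∪ A2, hasSum_subtype_iff_indicator.mpr hadd⟩
  have hpairs : ∀ q ∈ s0, q.1 ≤ q.2 := by
    intro q hq
    rw [hs0] at hq
    obtain ⟨F, -, hq'⟩ := Finset.mem_image.mp hq
    rw [← hq']
    simpa using hL0
  obtain ⟨t, ht1, ht2, ht3⟩ := disjointify_aux s0.card s0 le_rfl hpairs
  exact ⟨t, ht1, ht2, by rw [hsubs, ht3]⟩
end

section
/- Let n ≥ 2 be an integer and d_0, ..., d_{n−1} integers with d_j ≡ j (mod n). Then the set S = { ∑_{i=1}^∞ a_i / n^i : each a_i ∈ {d_0, ..., d_{n−1}} } has nonempty interior in ℝ. Moreover, the integer translates of S cover ℝ: ⋃_{k∈ℤ} (k + S) = ℝ. -/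
open Set Topology Pointwise

section Kenyon

variable (n : ℕ) (d : Fin n → ℤ)

/-- The summand function. -/
private noncomputable def kenyonF (a : ℕ → Fin n) (i : ℕ) : ℝ :=
  (d (a i) : ℝ) / (n : ℝ) ^ (i + 1)

/-- The sum map. -/
private noncomputable def kenyonPhi (a : ℕ → Fin n) : ℝ :=
  ∑' i, kenyonF n d a i

variable {n d}

private lemma kenyon_bound (hn : 2 ≤ n) :
    ∃ C : ℝ, 0 ≤ C ∧ ∀ (a : ℕ → Fin n) (i : ℕ),
      ‖kenyonF n d a i‖ ≤ C * (1 / (n : ℝ)) ^ i := by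
  have hn1 : (1 : ℝ) < n := by
    have : (2 : ℝ) ≤ n := by exact_mod_cast hn
    linarith
  have hnpos : (0 : ℝ) < n := by linarith
  refine ⟨(Finset.univ.sup fun j : Fin n => (d j).natAbs : ℕ), by positivity, ?_⟩
  intro a i
  have hle : |(d (a i) : ℝ)| ≤ ((Finset.univ.sup fun j : Fin n => (d j).natAbs : ℕ) : ℝ) := by
    have h1 : (d (a i)).natAbs ≤ Finset.univ.sup fun j : Fin n => (d j).natAbs :=
      Finset.le_sup (f := fun j : Fin n => (d j).natAbs) (Finset.mem_univ (a i))
    have h2 : (((d (a i)).natAbs : ℕ) : ℝ) ≤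
        ((Finset.univ.sup fun j : Fin n => (d j).natAbs : ℕ) : ℝ) := Nat.cast_le.mpr h1
    rwa [Nat.cast_natAbs, Int.cast_abs] at h2
  have hpow : (0 : ℝ) < (n : ℝ) ^ (i + 1) := by positivity
  have hpow2 : (n : ℝ) ^ i ≤ (n : ℝ) ^ (i + 1) :=
    pow_le_pow_right₀ hn1.le (Nat.le_succ i)
  calc ‖kenyonF n d a i‖ = |(d (a i) : ℝ)| / (n : ℝ) ^ (i + 1) := by
        rw [kenyonF, Real.norm_eq_abs, abs_div, abs_of_pos hpow]
    _ ≤ ((Finset.univ.sup fun j : Fin n => (d j).natAbs : ℕ) : ℝ) / (n : ℝ) ^ (i + 1) := by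
        gcongr
    _ ≤ ((Finset.univ.sup fun j : Fin n => (d j).natAbs : ℕ) : ℝ) / (n : ℝ) ^ i := by
        gcongr
    _ = ((Finset.univ.sup fun j : Fin n => (d j).natAbs : ℕ) : ℝ) * (1 / (n : ℝ)) ^ i := by
        rw [div_pow, one_pow, mul_one_div]

private lemma kenyon_summable_aux (hn : 2 ≤ n) :
    Summable fun i : ℕ => ((Finset.univ.sup fun j : Fin n => (d j).natAbs : ℕ) : ℝ) *
      (1 / (n : ℝ)) ^ i := by
  have hn1 : (1 : ℝ) < n := by
    have : (2 : ℝ) ≤ n := by exact_mod_cast hn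
    linarith
  refine Summable.mul_left _ (summable_geometric_of_lt_one (by positivity) ?_)
  rw [div_lt_one (by linarith)]
  linarith

private lemma kenyon_summable (hn : 2 ≤ n) (a : ℕ → Fin n) :
    Summable (kenyonF n d a) := by
  obtain ⟨C, hC0, hC⟩ := kenyon_bound (d := d) hn
  refine Summable.of_norm_bounded (g := fun i => C * (1 / (n : ℝ)) ^ i) ?_ (hC a)
  have hn1 : (1 : ℝ) < n := by
    have : (2 : ℝ) ≤ n := by exact_mod_cast hn
    linarith
  refine Summable.mul_left _ (summable_geometric_of_lt_one (by positivity) ?_)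
  rw [div_lt_one (by linarith)]
  linarith

private lemma kenyon_hasSum (hn : 2 ≤ n) (a : ℕ → Fin n) :
    HasSum (kenyonF n d a) (kenyonPhi n d a) :=
  (kenyon_summable hn a).hasSum

private lemma kenyon_set_eq (hn : 2 ≤ n) :
    {t : ℝ | ∃ a : ℕ → Fin n,
      HasSum (fun i => (d (a i) : ℝ) / (n : ℝ) ^ (i + 1)) t} = Set.range (kenyonPhi n d) := by
  ext t
  constructor
  · rintro ⟨a, ha⟩
    exact ⟨a, (ha.tsum_eq).symm ▸ rfl⟩
  · rintro ⟨a, rfl⟩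
    exact ⟨a, kenyon_hasSum hn a⟩

private lemma kenyon_continuous (hn : 2 ≤ n) : Continuous (kenyonPhi n d) := by
  obtain ⟨C, hC0, hC⟩ := kenyon_bound (d := d) hn
  have hn1 : (1 : ℝ) < n := by
    have : (2 : ℝ) ≤ n := by exact_mod_cast hn
    linarith
  refine continuous_tsum (f := fun i (a : ℕ → Fin n) => kenyonF n d a i)
    (fun i => ?_) (u := fun i => C * (1 / (n : ℝ)) ^ i) ?_ (fun i a => hC a i)
  · exact (continuous_of_discreteTopology (α := Fin n)
      (f := fun j => (d j : ℝ) / (n : ℝ) ^ (i + 1))).comp (continuous_apply i)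
  · refine Summable.mul_left _ (summable_geometric_of_lt_one (by positivity) ?_)
    rw [div_lt_one (by linarith)]
    linarith

/-- Prepending a digit. -/
private lemma kenyon_cons (hn : 2 ≤ n) (j : Fin n) (a : ℕ → Fin n) :
    kenyonPhi n d (fun i => Nat.casesOn i j a) =
      (d j : ℝ) / n + kenyonPhi n d a / n := by
  have hnpos : (0 : ℝ) < n := by
    have : (0 : ℕ) < n := by omega
    exact_mod_cast this
  set b : ℕ → Fin n := fun i => Nat.casesOn i j a with hb
  have htail : HasSum (fun i => kenyonF n d b (i + 1)) (kenyonPhi n d a / n) := by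
    have h : HasSum (fun i => kenyonF n d a i / n) (kenyonPhi n d a / n) :=
      (kenyon_hasSum (d := d) hn a).div_const (n : ℝ)
    convert h using 2 with i
    show (d (a i) : ℝ) / (n : ℝ) ^ (i + 1 + 1) = (d (a i) : ℝ) / (n : ℝ) ^ (i + 1) / n
    rw [div_div, ← pow_succ]
  have hsum := (hasSum_nat_add_iff (f := kenyonF n d b) 1).mp htail
  have h0 : ∑ i ∈ Finset.range 1, kenyonF n d b i = (d j : ℝ) / n := by
    simp [kenyonF, hb]
  rw [h0] at hsum
  have h2 : kenyonPhi n d b = kenyonPhi n d a / (n : ℝ) + (d j : ℝ) / n := hsum.tsum_eq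
  rw [h2]; ring

/-- Every element of ℤ + S, divided by n, is again in ℤ + S. -/
private lemma kenyon_div (hn : 2 ≤ n)
    (hd : ∀ j : Fin n, d j ≡ (j : ℤ) [ZMOD (n : ℤ)]) (k : ℤ) (a : ℕ → Fin n) :
    ∃ (q : ℤ) (b : ℕ → Fin n),
      ((k : ℝ) + kenyonPhi n d a) / n = (q : ℝ) + kenyonPhi n d b := by
  have hn0 : (0 : ℤ) < n := by exact_mod_cast Nat.lt_of_lt_of_le Nat.zero_lt_two hn
  set r : ℤ := k % (n : ℤ) with hr
  have hr0 : 0 ≤ r := Int.emod_nonneg k (by omega)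
  have hrn : r < n := Int.emod_lt_of_pos k hn0
  set j : Fin n := ⟨r.toNat, by omega⟩ with hj
  have hjr : (j : ℤ) = r := by
    simp [hj, Int.toNat_of_nonneg hr0]
  have hdvd : (n : ℤ) ∣ k - d j := by
    have h1 : (n : ℤ) ∣ (j : ℤ) - d j := (hd j).dvd
    have h2 : (n : ℤ) ∣ k - r := Int.dvd_self_sub_of_emod_eq hr.symm
    have := dvd_add h2 (hjr ▸ h1)
    simpa [sub_add_sub_cancel] using this
  obtain ⟨q, hq⟩ := hdvd
  refine ⟨q, fun i => Nat.casesOn i j a, ?_⟩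
  rw [kenyon_cons hn]
  have hnR : (n : ℝ) ≠ 0 := by positivity
  have hk : (k : ℝ) = (n : ℝ) * q + (d j : ℝ) := by
    have : (k : ℤ) = n * q + d j := by linarith [hq]
    exact_mod_cast congrArg (Int.cast : ℤ → ℝ) this
  rw [hk]
  field_simp
  ring

private lemma kenyon_mem_div_pow (hn : 2 ≤ n)
    (hd : ∀ j : Fin n, d j ≡ (j : ℤ) [ZMOD (n : ℤ)]) (a₀ : ℕ → Fin n) (m : ℕ) (k : ℤ) :
    ∃ (q : ℤ) (b : ℕ → Fin n),
      ((k : ℝ) + kenyonPhi n d a₀) / (n : ℝ) ^ m = (q : ℝ) + kenyonPhi n d b := by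
  induction m with
  | zero => exact ⟨k, a₀, by simp⟩
  | succ m ih =>
    obtain ⟨q, b, hqb⟩ := ih
    obtain ⟨q', b', hq'⟩ := kenyon_div hn hd q b
    refine ⟨q', b', ?_⟩
    rw [pow_succ, ← div_div, hqb, hq']

end Kenyon

/-- Kenyon's proposition: if `n ≥ 2` and digits `d 0, ..., d (n-1)` represent all
congruence classes mod `n` (`d j ≡ j [ZMOD n]`), then the set of generalized base-`n`
expansions with these digits has nonempty interior, and its integer translates
cover `ℝ`. -/
theorem kenyon_generalized_expansions (n : ℕ) (hn : 2 ≤ n) (d : Fin n → ℤ)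
    (hd : ∀ j : Fin n, d j ≡ (j : ℤ) [ZMOD (n : ℤ)]) :
    (interior {t : ℝ | ∃ a : ℕ → Fin n,
        HasSum (fun i => (d (a i) : ℝ) / (n : ℝ) ^ (i + 1)) t}).Nonempty ∧
      (⋃ k : ℤ, (fun s => (k : ℝ) + s) ''
        {t : ℝ | ∃ a : ℕ → Fin n,
          HasSum (fun i => (d (a i) : ℝ) / (n : ℝ) ^ (i + 1)) t}) = Set.univ := by
  have hn1 : (1 : ℝ) < n := by
    have : (2 : ℝ) ≤ n := by exact_mod_cast hn
    linarith
  have hnpos : (0 : ℝ) < n := by linarith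
  set S : Set ℝ := {t : ℝ | ∃ a : ℕ → Fin n,
    HasSum (fun i => (d (a i) : ℝ) / (n : ℝ) ^ (i + 1)) t} with hSdef
  have hSr : S = Set.range (kenyonPhi n d) := kenyon_set_eq hn
  have hScompact : IsCompact S := by
    rw [hSr]
    exact isCompact_range (kenyon_continuous hn)
  have hSclosed : IsClosed S := hScompact.isClosed
  -- the union of translates
  set T : Set ℝ := ⋃ k : ℤ, (fun s => (k : ℝ) + s) '' S with hTdef
  have hmemT : ∀ (k : ℤ) (a : ℕ → Fin n), (k : ℝ) + kenyonPhi n d a ∈ T := by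
    intro k a
    refine Set.mem_iUnion.mpr ⟨k, ⟨kenyonPhi n d a, ?_, rfl⟩⟩
    rw [hSr]; exact ⟨a, rfl⟩
  -- T is closed
  have hTclosed : IsClosed T := by
    have : T = Set.range ((↑) : ℤ → ℝ) + S := by
      ext x
      simp only [hTdef, Set.mem_iUnion, Set.mem_image, Set.mem_add, Set.mem_range]
      constructor
      · rintro ⟨k, s, hs, rfl⟩; exact ⟨k, ⟨k, rfl⟩, s, hs, rfl⟩
      · rintro ⟨_, ⟨k, rfl⟩, s, hs, rfl⟩; exact ⟨k, s, hs, rfl⟩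
    rw [this]
    exact IsClosed.add_right_of_isCompact Int.isClosedEmbedding_coe_real.isClosed_range hScompact
  -- T is dense, hence all of ℝ
  have hTuniv : T = Set.univ := by
    have hdense : Dense T := by
      intro x
      rw [Metric.mem_closure_iff]
      intro ε hε
      set a₀ : ℕ → Fin n := fun _ => ⟨0, by omega⟩ with ha₀
      set s₀ : ℝ := kenyonPhi n d a₀ with hs₀
      obtain ⟨m, hm⟩ := pow_unbounded_of_one_lt ((1 + |s₀|) / ε) hn1
      have hpm : (0 : ℝ) < (n : ℝ) ^ m := by positivity
      set k : ℤ := ⌊(n : ℝ) ^ m * x⌋ with hk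
      obtain ⟨q, b, hqb⟩ := kenyon_mem_div_pow hn hd a₀ m k
      refine ⟨((k : ℝ) + s₀) / (n : ℝ) ^ m, ?_, ?_⟩
      · rw [hqb]; exact hmemT q b
      · rw [Real.dist_eq]
        have h1 : |x - ((k : ℝ) + s₀) / (n : ℝ) ^ m|
            = |(n : ℝ) ^ m * x - k - s₀| / (n : ℝ) ^ m := by
          rw [← abs_of_pos hpm, ← abs_div]
          congr 1
          field_simp
          rw [abs_of_pos hpm]
          ring
        rw [h1]
        have hfl : |(n : ℝ) ^ m * x - k| ≤ 1 := by
          rw [abs_le]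
          constructor
          · have := Int.floor_le ((n : ℝ) ^ m * x)
            simp only [hk]; linarith
          · have := Int.lt_floor_add_one ((n : ℝ) ^ m * x)
            simp only [hk]; linarith
        have h2 : |(n : ℝ) ^ m * x - k - s₀| ≤ 1 + |s₀| := by
          calc |(n : ℝ) ^ m * x - k - s₀| ≤ |(n : ℝ) ^ m * x - k| + |s₀| := abs_sub _ _
            _ ≤ 1 + |s₀| := by linarith
        have h3 : (1 + |s₀|) / (n : ℝ) ^ m < ε := by
          rw [div_lt_iff₀ hpm]
          have hmm := mul_lt_mul_of_pos_right hm hε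
          rw [div_mul_cancel₀ _ (ne_of_gt hε)] at hmm
          linarith
        calc |(n : ℝ) ^ m * x - k - s₀| / (n : ℝ) ^ m ≤ (1 + |s₀|) / (n : ℝ) ^ m := by gcongr
          _ < ε := h3
    rw [← hTclosed.closure_eq]
    exact hdense.closure_eq
  refine ⟨?_, hTuniv⟩
  -- Baire category
  have hclosed : ∀ k : ℤ, IsClosed ((fun s => (k : ℝ) + s) '' S) := by
    intro k
    exact ((Homeomorph.addLeft (k : ℝ)).isClosedMap) S hSclosed
  obtain ⟨k, hk⟩ := nonempty_interior_of_iUnion_of_closed hclosed hTuniv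
  have himg : (fun s => (k : ℝ) + s) '' S = (Homeomorph.addLeft (k : ℝ)) '' S := rfl
  rw [himg, ← Homeomorph.image_interior] at hk
  exact hk.of_image
end

section
/- The subsum set of the Guthrie–Nymann sequence x_{2k−1} = 3/4^k, x_{2k} = 2/4^k (k ≥ 1) contains the interval [3/4, 1]; in particular this subsum set has nonempty interior. -/
namespace GNaux

noncomputable def dval : Fin 4 → ℝ := ![0, 2, 3, 5]

def cmpl : Fin 4 → Fin 4 := ![3, 2, 1, 0]

lemma dval_cmpl (j : Fin 4) : dval (cmpl j) = 5 - dval j := by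
  fin_cases j <;> norm_num [dval, cmpl, Matrix.cons_val_two, Matrix.cons_val_three]

lemma dval_nonneg (j : Fin 4) : 0 ≤ dval j := by
  fin_cases j <;> norm_num [dval]

lemma dval_le (j : Fin 4) : dval j ≤ 5 := by
  fin_cases j <;> norm_num [dval]

noncomputable def val (k : ℕ) (c : ℕ → Fin 4) : ℝ :=
  ∑ i ∈ Finset.range k, dval (c i) * (1/4 : ℝ) ^ (i + 1)

noncomputable def B (k : ℕ) : ℝ := 5/3 * (1/4 : ℝ) ^ k

lemma B_pos (k : ℕ) : 0 < B k := by
  have : (0:ℝ) < (1/4:ℝ)^k := by positivity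
  simp only [B]; linarith

lemma B_succ (k : ℕ) : B (k + 1) = B k / 4 := by
  simp [B, pow_succ]; ring

def cons (d : Fin 4) (c : ℕ → Fin 4) : ℕ → Fin 4 := fun n => Nat.casesOn n d c

lemma val_cons (k : ℕ) (d : Fin 4) (c : ℕ → Fin 4) :
    val (k + 1) (cons d c) = (dval d + val k c) / 4 := by
  rw [val, Finset.sum_range_succ']
  have h1 : ∀ i, dval (cons d c (i + 1)) * (1/4 : ℝ) ^ (i + 1 + 1)
      = (dval (c i) * (1/4 : ℝ) ^ (i + 1)) / 4 := by
    intro i; simp [cons, pow_succ]; ring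
  simp only [h1, ← Finset.sum_div]
  simp [cons, val]
  ring

def compl (c : ℕ → Fin 4) : ℕ → Fin 4 := fun n => cmpl (c n)

lemma five_sum (k : ℕ) : ∑ i ∈ Finset.range k, (5 : ℝ) * (1/4 : ℝ) ^ (i + 1) = 5/3 - B k := by
  induction k with
  | zero => simp [B]
  | succ n ih =>
    rw [Finset.sum_range_succ, ih, B, B, pow_succ]
    ring

lemma val_compl (k : ℕ) (c : ℕ → Fin 4) :
    val k (compl c) = 5/3 - B k - val k c := by
  have : ∀ i, dval (compl c i) * (1/4 : ℝ) ^ (i + 1)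
      = 5 * (1/4 : ℝ) ^ (i + 1) - dval (c i) * (1/4 : ℝ) ^ (i + 1) := by
    intro i
    rw [show compl c i = cmpl (c i) from rfl, dval_cmpl]; ring
  rw [val, Finset.sum_congr rfl fun i _ => this i, Finset.sum_sub_distrib, five_sum]
  rfl

end GNaux

namespace GNaux

lemma dval0 : dval 0 = 0 := by norm_num [dval]
lemma dval1 : dval 1 = 2 := by norm_num [dval]
lemma dval2 : dval 2 = 3 := by norm_num [dval, Matrix.cons_val_two]
lemma dval3 : dval 3 = 5 := by norm_num [dval, Matrix.cons_val_three]

lemma core (k : ℕ) :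
    (∀ w : ℝ, 2/3 ≤ w → w ≤ 1 →
      ∃ c, 0 ≤ w - val k c ∧ w - val k c ≤ B k) ∧
    (∀ w : ℝ, 0 ≤ w → w ≤ 2/3 →
      ∃ c, (0 ≤ w - val k c ∧ w - val k c ≤ B k) ∨
           (0 ≤ (2/3 - w) - val k c ∧ (2/3 - w) - val k c ≤ B k)) := by
  induction k with
  | zero =>
    constructor
    · intro w h1 h2
      refine ⟨fun _ => 0, ?_, ?_⟩ <;> simp [val, B] <;> linarith
    · intro w h1 h2
      refine ⟨fun _ => 0, Or.inl ⟨?_, ?_⟩⟩ <;> simp [val, B] <;> linarith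
  | succ k ih =>
    obtain ⟨IHB, IHA⟩ := ih
    have hBs := B_succ k
    have hBp := B_pos k
    constructor
    · -- B part : w ∈ [2/3, 1]
      intro w h1 h2
      by_cases hA : w ≤ 3/4
      · obtain ⟨c, hc1, hc2⟩ := IHB (4*w - 2) (by linarith) (by linarith)
        refine ⟨cons 1 c, ?_, ?_⟩ <;> rw [val_cons, dval1] <;> linarith
      · by_cases hB : 11/12 ≤ w
        · obtain ⟨c, hc1, hc2⟩ := IHB (4*w - 3) (by linarith) (by linarith)
          refine ⟨cons 2 c, ?_, ?_⟩ <;> rw [val_cons, dval2] <;> linarith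
        · push_neg at hA hB
          rcases IHA (4*w - 3) (by linarith) (by linarith) with ⟨c, hc | hc⟩
          · refine ⟨cons 2 c, ?_, ?_⟩ <;> rw [val_cons, dval2] <;> linarith [hc.1, hc.2]
          · refine ⟨cons 1 (compl c), ?_, ?_⟩ <;>
              rw [val_cons, dval1, val_compl] <;> linarith [hc.1, hc.2]
    · -- A part : w ∈ [0, 2/3]
      intro w h1 h2
      by_cases c1 : w < 1/6
      · rcases IHA (4*w) (by linarith) (by linarith) with ⟨c, hc | hc⟩
        · exact ⟨cons 0 c, Or.inl (by rw [val_cons, dval0]; constructor <;> linarith [hc.1, hc.2])⟩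
        · exact ⟨cons 1 c, Or.inr (by rw [val_cons, dval1]; constructor <;> linarith [hc.1, hc.2])⟩
      · push_neg at c1
        by_cases c2 : w ≤ 1/4
        · obtain ⟨c, hc1, hc2⟩ := IHB (4*w) (by linarith) (by linarith)
          exact ⟨cons 0 c, Or.inl (by rw [val_cons, dval0]; constructor <;> linarith)⟩
        · push_neg at c2
          by_cases c3 : w ≤ 1/3
          · rcases IHA (4*w - 1) (by linarith) (by linarith) with ⟨c, hc | hc⟩
            · exact ⟨cons 0 (compl c), Or.inr (by
                rw [val_cons, dval0, val_compl]; constructor <;> linarith [hc.1, hc.2])⟩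
            · exact ⟨cons 0 (compl c), Or.inl (by
                rw [val_cons, dval0, val_compl]; constructor <;> linarith [hc.1, hc.2])⟩
          · push_neg at c3
            by_cases c4 : w < 5/12
            · rcases IHA (5/3 - 4*w) (by linarith) (by linarith) with ⟨c, hc | hc⟩
              · exact ⟨cons 0 (compl c), Or.inl (by
                  rw [val_cons, dval0, val_compl]; constructor <;> linarith [hc.1, hc.2])⟩
              · exact ⟨cons 0 (compl c), Or.inr (by
                  rw [val_cons, dval0, val_compl]; constructor <;> linarith [hc.1, hc.2])⟩
            · push_neg at c4
              by_cases c5 : w ≤ 1/2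
              · obtain ⟨c, hc1, hc2⟩ := IHB (8/3 - 4*w) (by linarith) (by linarith)
                exact ⟨cons 0 c, Or.inr (by rw [val_cons, dval0]; constructor <;> linarith)⟩
              · push_neg at c5
                rcases IHA (4*w - 2) (by linarith) (by linarith) with ⟨c, hc | hc⟩
                · exact ⟨cons 1 c, Or.inl (by
                    rw [val_cons, dval1]; constructor <;> linarith [hc.1, hc.2])⟩
                · exact ⟨cons 0 c, Or.inr (by
                    rw [val_cons, dval0]; constructor <;> linarith [hc.1, hc.2])⟩

end GNaux

namespace GNaux

noncomputable def Phi (c : ℕ → Fin 4) : ℝ := ∑' i, dval (c i) * (1/4 : ℝ) ^ (i + 1)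

lemma summable_bound :
    Summable (fun i : ℕ => (5 : ℝ) * (1/4 : ℝ) ^ (i + 1)) := by
  have h0 : Summable (fun i : ℕ => ((1/4:ℝ))^i) :=
    summable_geometric_of_lt_one (by norm_num) (by norm_num)
  have h1 := h0.mul_left ((5:ℝ) * (1/4:ℝ))
  apply h1.congr
  intro i
  rw [pow_succ]
  ring

lemma term_nonneg (c : ℕ → Fin 4) (i : ℕ) : 0 ≤ dval (c i) * (1/4 : ℝ) ^ (i + 1) := by
  have := dval_nonneg (c i)
  positivity

lemma term_le (c : ℕ → Fin 4) (i : ℕ) :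
    dval (c i) * (1/4 : ℝ) ^ (i + 1) ≤ (5 : ℝ) * (1/4 : ℝ) ^ (i + 1) := by
  have := dval_le (c i)
  have hp : (0:ℝ) < (1/4 : ℝ) ^ (i+1) := by positivity
  nlinarith

lemma summable_phi (c : ℕ → Fin 4) :
    Summable (fun i => dval (c i) * (1/4 : ℝ) ^ (i + 1)) :=
  Summable.of_nonneg_of_le (term_nonneg c) (term_le c) summable_bound

lemma continuous_phi : Continuous Phi := by
  have := continuous_tsum (f := fun (i : ℕ) (c : ℕ → Fin 4) => dval (c i) * (1/4 : ℝ) ^ (i + 1))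
    (u := fun i : ℕ => (5:ℝ) * (1/4 : ℝ) ^ (i+1))
    (fun i => ((continuous_of_discreteTopology (f := dval)).comp (continuous_apply i)).mul
      continuous_const)
    summable_bound
    (fun n c => by
      rw [Real.norm_eq_abs, abs_of_nonneg (term_nonneg c n)]
      exact term_le c n)
  exact this

lemma phi_pad (k : ℕ) (c : ℕ → Fin 4) :
    Phi (fun n => if n < k then c n else 0) = val k c := by
  rw [Phi, tsum_eq_sum (s := Finset.range k)]
  · apply Finset.sum_congr rfl
    intro i hi
    rw [if_pos (Finset.mem_range.mp hi)]
  · intro i hi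
    rw [if_neg (fun h => hi (Finset.mem_range.mpr h)), dval0, zero_mul]

lemma mem_range_phi (t : ℝ) (ht1 : 2/3 ≤ t) (ht2 : t ≤ 1) : t ∈ Set.range Phi := by
  have hcl : IsClosed (Set.range Phi) := (isCompact_range continuous_phi).isClosed
  rw [← hcl.closure_eq]
  rw [Metric.mem_closure_iff]
  intro ε hε
  obtain ⟨k, hk⟩ := exists_pow_lt_of_lt_one (x := 3/5 * ε) (y := (1/4 : ℝ)) (by linarith) (by norm_num)
  obtain ⟨c, hc1, hc2⟩ := (core k).1 t ht1 ht2
  refine ⟨val k c, ⟨_, phi_pad k c⟩, ?_⟩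
  rw [Real.dist_eq, abs_of_nonneg hc1]
  have : B k < ε := by rw [B]; nlinarith
  linarith

end GNaux

namespace GNaux

def aB : Fin 4 → Bool := ![false, false, true, true]
def bB : Fin 4 → Bool := ![false, true, false, true]

lemma bits_split (j : Fin 4) :
    (if aB j then (3:ℝ) else 0) + (if bB j then (2:ℝ) else 0) = dval j := by
  fin_cases j <;> norm_num [aB, bB, dval]

lemma digit_mem_subsums (x : ℕ → ℝ)
    (hx : ∀ k : ℕ, x (2 * k) = 3 / 4 ^ (k + 1) ∧ x (2 * k + 1) = 2 / 4 ^ (k + 1))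
    (c : ℕ → Fin 4) : Phi c ∈ subsums x := by
  classical
  set A : Set ℕ := {n | if n % 2 = 0 then aB (c (n / 2)) = true else bB (c (n / 2)) = true}
    with hA
  have hpow : ∀ k : ℕ, ((1:ℝ)/4) ^ (k+1) = 1 / 4 ^ (k+1) := by
    intro k; rw [div_pow]; norm_num
  have heven : (fun k => A.indicator x (2 * k)) =
      fun k => if aB (c k) then (3:ℝ) * (1/4:ℝ) ^ (k+1) else 0 := by
    funext k
    have hm : (2 * k) % 2 = 0 := by omega
    have hd : (2 * k) / 2 = k := by omega
    by_cases h : aB (c k)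
    · rw [Set.indicator_of_mem (by simp [hA, hm, hd, h]), (hx k).1, if_pos h, hpow k]
      ring
    · rw [Set.indicator_of_notMem (by simp [hA, hm, hd, h]), if_neg h]
  have hodd : (fun k => A.indicator x (2 * k + 1)) =
      fun k => if bB (c k) then (2:ℝ) * (1/4:ℝ) ^ (k+1) else 0 := by
    funext k
    have hm : (2 * k + 1) % 2 = 1 := by omega
    have hd : (2 * k + 1) / 2 = k := by omega
    by_cases h : bB (c k)
    · rw [Set.indicator_of_mem (by simp [hA, hm, hd, h]), (hx k).2, if_pos h, hpow k]
      ring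
    · rw [Set.indicator_of_notMem (by simp [hA, hm, hd, h]), if_neg h]
  have hsa : Summable (fun k => if aB (c k) then (3:ℝ) * (1/4:ℝ) ^ (k+1) else 0) := by
    apply Summable.of_nonneg_of_le _ _ summable_bound
    · intro i; split <;> positivity
    · intro i
      have hp : (0:ℝ) < (1/4 : ℝ) ^ (i+1) := by positivity
      split <;> nlinarith
  have hsb : Summable (fun k => if bB (c k) then (2:ℝ) * (1/4:ℝ) ^ (k+1) else 0) := by
    apply Summable.of_nonneg_of_le _ _ summable_bound
    · intro i; split <;> positivity
    · intro i
      have hp : (0:ℝ) < (1/4 : ℝ) ^ (i+1) := by positivity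
      split <;> nlinarith
  have ha := hsa.hasSum
  have hb := hsb.hasSum
  have hadd := ha.add hb
  have hfun : (fun k => (if aB (c k) then (3:ℝ) * (1/4:ℝ) ^ (k+1) else 0) +
      (if bB (c k) then (2:ℝ) * (1/4:ℝ) ^ (k+1) else 0)) =
      (fun k => dval (c k) * (1/4:ℝ) ^ (k+1)) := by
    funext k
    rw [← bits_split (c k)]
    by_cases h1 : aB (c k) <;> by_cases h2 : bB (c k) <;> simp [h1, h2] <;> ring
  rw [hfun] at hadd
  have hsum := hadd.unique (summable_phi c).hasSum
  have hfinal : HasSum (A.indicator x) (Phi c) := by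
    rw [show Phi c = ∑' (b : ℕ), dval (c b) * (1/4 : ℝ) ^ (b + 1) from rfl, ← hsum]
    exact HasSum.even_add_odd (heven ▸ ha) (hodd ▸ hb)
  exact ⟨A, hasSum_subtype_iff_indicator.mpr hfinal⟩

end GNaux


/-- The subsum set of the Guthrie–Nymann sequence `3/4, 2/4, 3/16, 2/16, ...`
contains the interval `[3/4, 1]`; in particular it has nonempty interior. -/
theorem guthrie_nymann_contains_interval (x : ℕ → ℝ)
    (hx : ∀ k : ℕ, x (2 * k) = 3 / 4 ^ (k + 1) ∧ x (2 * k + 1) = 2 / 4 ^ (k + 1)) :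
    Set.Icc (3 / 4 : ℝ) 1 ⊆ subsums x ∧ (interior (subsums x)).Nonempty := by
  have hsub : Set.Icc (3 / 4 : ℝ) 1 ⊆ subsums x := by
    intro t ht
    obtain ⟨c, hc⟩ := GNaux.mem_range_phi t (by linarith [ht.1]) ht.2
    rw [← hc]
    exact GNaux.digit_mem_subsums x hx c
  refine ⟨hsub, ⟨7/8, ?_⟩⟩
  have h78 : (7/8 : ℝ) ∈ interior (Set.Icc (3/4 : ℝ) 1) := by
    rw [interior_Icc]
    constructor <;> norm_num
  exact interior_mono hsub h78
end

section
/- If (x_i) is an absolutely summable real sequence, then its subsum set equals the translate by X⁻ of the subsum set of the sequence of absolute values: Σ((x_i)) = Σ((|x_i|)) + X⁻, where X⁻ is the sum of all the negative terms of (x_i). -/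
/-- For an absolutely summable sequence, the subsum set is the translate by `X⁻`
(the sum of the negative terms) of the subsum set of the sequence of absolute values. -/
theorem subsums_abs_translate (x : ℕ → ℝ)
    (hsum : Summable fun i => |x i|) :
    subsums x =
      (fun s => s + ∑' i, if x i < 0 then x i else 0) '' subsums (fun i => |x i|) := by
  have hx : Summable x := hsum.of_abs
  have hnegeq : (fun i => if x i < 0 then x i else 0) =
      Set.indicator {i | x i < 0} x := by
    funext i
    simp [Set.indicator_apply]
  have hneg : Summable (fun i => if x i < 0 then x i else 0) := by
    rw [hnegeq]; exact hx.indicator _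
  ext r
  simp only [subsums, Set.mem_setOf_eq, Set.mem_image]
  constructor
  · rintro ⟨A, hA⟩
    replace hA : HasSum (A.indicator x) r := hasSum_subtype_iff_indicator.mp hA
    set B : Set ℕ := {i | (i ∈ A ∧ 0 ≤ x i) ∨ (x i < 0 ∧ i ∉ A)} with hB
    have key : ∀ i, B.indicator (fun j => |x j|) i + (if x i < 0 then x i else 0)
        = A.indicator x i := by
      intro i
      by_cases hi : x i < 0 <;> by_cases hiA : i ∈ A <;>
        simp [Set.indicator_apply, hB, hi, hiA, hiA, not_lt.mp, abs_of_neg,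
          abs_of_nonneg, le_of_lt]
    have hBsum : Summable (B.indicator fun j => |x j|) := hsum.indicator B
    refine ⟨∑' i, B.indicator (fun j => |x j|) i, ⟨B, ?_⟩, ?_⟩
    · exact hasSum_subtype_iff_indicator.mpr hBsum.hasSum
    · have : (∑' i, B.indicator (fun j => |x j|) i) + ∑' i, (if x i < 0 then x i else 0)
          = ∑' i, A.indicator x i := by
        rw [← Summable.tsum_add hBsum hneg]
        exact tsum_congr key
      rw [this, hA.tsum_eq]
  · rintro ⟨s, ⟨B, hB⟩, hs⟩
    replace hB : HasSum (B.indicator fun j => |x j|) s := hasSum_subtype_iff_indicator.mp hB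
    set A : Set ℕ := {i | (i ∈ B ∧ 0 ≤ x i) ∨ (x i < 0 ∧ i ∉ B)} with hA
    have key : ∀ i, B.indicator (fun j => |x j|) i + (if x i < 0 then x i else 0)
        = A.indicator x i := by
      intro i
      by_cases hi : x i < 0 <;> by_cases hiB : i ∈ B <;>
        simp [Set.indicator_apply, hA, hi, hiB, not_lt.mp, abs_of_neg,
          abs_of_nonneg, le_of_lt]
    refine ⟨A, hasSum_subtype_iff_indicator.mpr ?_⟩
    have hAsum : Summable (A.indicator x) := hx.indicator A
    have : ∑' i, A.indicator x i =
        (∑' i, B.indicator (fun j => |x j|) i) + ∑' i, (if x i < 0 then x i else 0) := by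
      rw [← Summable.tsum_add (hsum.indicator B) hneg]
      exact (tsum_congr key).symm
    have hr : ∑' i, A.indicator x i = r := by
      rw [this, hB.tsum_eq, hs]
    exact hr ▸ hAsum.hasSum
end
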